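/- arXiv:2502.18096 — 3 statements merged into one kernel-verified Lean document; each statement's English description precedes it below -/
import Mathlib

section
/- In the Sergeev superalgebra S_n, the elements s_a = (1/√2) t_a (c_{a+1} − c_a), a = 1,…,n−1, satisfy the symmetric group relations s_a² = 1, s_a s_{a+1} s_a = s_{a+1} s_a s_{a+1}, and s_a s_b = s_b s_a for |a−b| > 1, together with the semidirect-product relations s_a c_a = c_{a+1} s_a, s_a c_{a+1} = c_a s_a, and s_a c_b = c_b s_a for b ≠ a, a+1. -/
open scoped Classical

noncomputable section

/-- Generators of the Sergeev superalgebra: `T a` for `1 ≤ a ≤ n-1`, `C a` for `1 ≤ a ≤ n`. -/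
inductive SGen (n : ℕ) : Type
  | T : {a : ℕ // 1 ≤ a ∧ a < n} → SGen n
  | C : {a : ℕ // 1 ≤ a ∧ a ≤ n} → SGen n

/-- The generator `t_a` in the free algebra (junk value `0` outside the valid range). -/
def tf (n a : ℕ) : FreeAlgebra ℂ (SGen n) :=
  if h : 1 ≤ a ∧ a < n then FreeAlgebra.ι ℂ (SGen.T ⟨a, h⟩) else 0

/-- The generator `c_a` in the free algebra (junk value `0` outside the valid range). -/
def cf (n a : ℕ) : FreeAlgebra ℂ (SGen n) :=
  if h : 1 ≤ a ∧ a ≤ n then FreeAlgebra.ι ℂ (SGen.C ⟨a, h⟩) else 0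

/-- Defining relations of the Sergeev superalgebra `S_n`. -/
inductive SRel (n : ℕ) : FreeAlgebra ℂ (SGen n) → FreeAlgebra ℂ (SGen n) → Prop
  | tsq (a : ℕ) (h1 : 1 ≤ a) (h2 : a < n) : SRel n (tf n a * tf n a) 1
  | tbraid (a : ℕ) (h1 : 1 ≤ a) (h2 : a + 1 < n) :
      SRel n (tf n a * tf n (a + 1) * tf n a) (tf n (a + 1) * tf n a * tf n (a + 1))
  | tanti (a b : ℕ) (h1 : 1 ≤ a) (h2 : b < n) (h3 : a + 1 < b) :
      SRel n (tf n a * tf n b) (-(tf n b * tf n a))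
  | csq (a : ℕ) (h1 : 1 ≤ a) (h2 : a ≤ n) : SRel n (cf n a * cf n a) (-1)
  | canti (a b : ℕ) (h1 : 1 ≤ a) (h2 : a ≤ n) (h3 : 1 ≤ b) (h4 : b ≤ n) (h5 : a ≠ b) :
      SRel n (cf n a * cf n b) (-(cf n b * cf n a))
  | tc (a b : ℕ) (h1 : 1 ≤ a) (h2 : a < n) (h3 : 1 ≤ b) (h4 : b ≤ n) :
      SRel n (tf n a * cf n b) (-(cf n b * tf n a))

/-- The Sergeev superalgebra `S_n`, presented by generators and relations. -/
abbrev Sergeev (n : ℕ) : Type := RingQuot (SRel n)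

/-- The generator `t_a` of `S_n`. -/
def tS (n a : ℕ) : Sergeev n := RingQuot.mkAlgHom ℂ (SRel n) (tf n a)

/-- The generator `c_a` of `S_n`. -/
def cS (n a : ℕ) : Sergeev n := RingQuot.mkAlgHom ℂ (SRel n) (cf n a)

/-- `t_{ab} = (-1)^(b-a-1) t_{b-1} ⋯ t_{a+1} t_a t_{a+1} ⋯ t_{b-1}` for `a < b`. -/
def ttS (n a b : ℕ) : Sergeev n :=
  (-1 : ℂ) ^ (b - a - 1) •
    ((((List.range' (a + 1) (b - 1 - a)).reverse.map (tS n)).prod) * tS n a *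
      (((List.range' (a + 1) (b - 1 - a)).map (tS n)).prod))

/-- `t_{ab}` for all `a ≠ b`, with `t_{ba} = -t_{ab}`. -/
def tsgn (n a b : ℕ) : Sergeev n :=
  if a < b then ttS n a b else if b < a then -ttS n b a else 0

/-- The odd Jucys–Murphy element `m_a = t_{1a} + ⋯ + t_{a-1,a}`. -/
def mS (n a : ℕ) : Sergeev n := ∑ k ∈ Finset.Ico 1 a, tsgn n k a

/-- The (even) Jucys–Murphy element `x_a = √2 m_a c_a`. -/
def xS (n a : ℕ) : Sergeev n := (Real.sqrt 2 : ℂ) • (mS n a * cS n a)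

/-- `s_a = (1/√2) t_a (c_{a+1} - c_a)`. -/
def sS (n a : ℕ) : Sergeev n := ((Real.sqrt 2 : ℂ))⁻¹ • (tS n a * (cS n (a + 1) - cS n a))

/-- The intertwiner `φ_a`. -/
def phiS (n a : ℕ) : Sergeev n :=
  sS n a * (xS n a ^ 2 - xS n (a + 1) ^ 2) + xS n a + xS n (a + 1)
    - cS n a * cS n (a + 1) * (xS n a - xS n (a + 1))

/-- Boxes of the shifted Young diagram of a strict partition `lam` (1-based): the
box `(i,j)` is present iff `i ≤ j ≤ λ_i + i - 1`. -/
def cells (lam : List ℕ) : Set (ℕ × ℕ) :=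
  {p | 1 ≤ p.1 ∧ p.1 ≤ p.2 ∧ p.2 + 1 ≤ lam.getD (p.1 - 1) 0 + p.1}

/-- A standard barred tableau with `n` boxes: a strict partition `lam` of `n`,
a standard filling `entry` of the shifted diagram of `lam` by `1, …, n`
(increasing along rows and columns), and a set `barred` of barred entries,
none of which occupies a diagonal box. -/
structure SBT (n : ℕ) : Type where
  lam : List ℕ
  sorted : lam.Pairwise (· > ·)
  pos : ∀ p ∈ lam, 0 < p
  sum_eq : lam.sum = n
  entry : ℕ × ℕ → ℕ
  bij : Set.BijOn entry (cells lam) (Set.Icc 1 n)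
  entry_junk : ∀ p, p ∉ cells lam → entry p = 0
  row_incr : ∀ p ∈ cells lam, (p.1, p.2 + 1) ∈ cells lam → entry p < entry (p.1, p.2 + 1)
  col_incr : ∀ p ∈ cells lam, (p.1 + 1, p.2) ∈ cells lam → entry p < entry (p.1 + 1, p.2)
  barred : Set ℕ
  barred_sub : barred ⊆ Set.Icc 1 n
  barred_nondiag : ∀ p ∈ cells lam, entry p ∈ barred → p.1 ≠ p.2

/-- The box occupied by the entry `a`. -/
def SBT.box {n : ℕ} (U : SBT n) (a : ℕ) : ℕ × ℕ :=
  if h : ∃ p ∈ cells U.lam, U.entry p = a then h.choose else (0, 0)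

/-- The content `j - i` of the box occupied by the entry `a`. -/
def SBT.content {n : ℕ} (U : SBT n) (a : ℕ) : ℕ := (U.box a).2 - (U.box a).1

/-- The signed content `κ_a(U) = ± √(σ(σ+1))`, negative iff `a` is barred in `U`. -/
def SBT.kappa {n : ℕ} (U : SBT n) (a : ℕ) : ℂ :=
  (if a ∈ U.barred then -1 else 1) *
    ((Real.sqrt ((U.content a : ℝ) * ((U.content a : ℝ) + 1)) : ℝ) : ℂ)

/-- A set of boxes is (the set of boxes of) a shifted Young diagram of a strict partition. -/
def IsShifted (S : Set (ℕ × ℕ)) : Prop :=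
  (∀ p ∈ S, 1 ≤ p.1 ∧ p.1 ≤ p.2) ∧
  (∀ p ∈ S, p.1 < p.2 → (p.1, p.2 - 1) ∈ S) ∧
  (∀ p ∈ S, 1 < p.1 → (p.1 - 1, p.2) ∈ S)

/-- `q` is an addable box for the shifted diagram `S`. -/
def Addable (S : Set (ℕ × ℕ)) (q : ℕ × ℕ) : Prop := q ∉ S ∧ IsShifted (insert q S)

/-- The shape formed by the boxes of `U` holding the entries `1, …, k`. -/
def SBT.shapeAt {n : ℕ} (U : SBT n) (k : ℕ) : Set (ℕ × ℕ) :=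
  {p | p ∈ cells U.lam ∧ U.entry p ≤ k}

/-- `√(σ(σ+1))` where `σ` is the content of the box `q`. -/
def sqc (q : ℕ × ℕ) : ℂ :=
  ((Real.sqrt (((q.2 - q.1 : ℕ) : ℝ) * (((q.2 - q.1 : ℕ) : ℝ) + 1)) : ℝ) : ℂ)

/-- The signed contents of all possible barred or unbarred entries placed
in addable boxes of the shape `S` (a shape with at most `n` boxes). -/
def bVals (n : ℕ) (S : Set (ℕ × ℕ)) : Finset ℂ :=
  ((Finset.Icc 1 (n + 1) ×ˢ Finset.Icc 1 (n + 1)).filter fun q => Addable S q).biUnion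
    fun q => if q.1 = q.2 then {sqc q} else {sqc q, -sqc q}

/-- The Jucys–Murphy idempotent of the sub-tableau of `U` on the entries `1, …, k`,
computed in the ambient algebra `S_N` (the inclusion `S_r → S_N` sends `t_a ↦ t_a`,
`c_a ↦ c_a` and hence `x_a ↦ x_a`, so this represents the image of `e` under it). -/
def eAux (N : ℕ) {r : ℕ} (U : SBT r) : ℕ → Sergeev N
  | 0 => 1
  | 1 => 1
  | (k + 2) =>
      eAux N U (k + 1) *
        Polynomial.aeval (xS N (k + 2))
          (∏ b ∈ bVals r (U.shapeAt (k + 1)) \ {U.kappa (k + 2)},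
            (Polynomial.C ((U.kappa (k + 2) - b)⁻¹) * (Polynomial.X - Polynomial.C b)))

/-- The element `e_U` of a standard barred tableau `U` with `r` boxes, viewed in `S_N`. -/
def eIn (N : ℕ) {r : ℕ} (U : SBT r) : Sergeev N := eAux N U r

/-- The element `e_U ∈ S_n` associated with a standard barred tableau `U` with `n` boxes. -/
def eU {n : ℕ} (U : SBT n) : Sergeev n := eIn n U


section AbstractLemmas

variable {R : Type*} [Ring R] [Algebra ℂ R]

local notation "r2" => ((Real.sqrt 2 : ℝ) : ℂ)

lemma r2sq : r2 * r2 = 2 := by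
  rw [← Complex.ofReal_mul, Real.mul_self_sqrt (by norm_num)]; norm_num

lemma r2ne : r2 ≠ 0 := by
  simpa using Real.sqrt_ne_zero'.mpr (by norm_num)

lemma half_smul : (r2⁻¹ * r2⁻¹) • ((2:ℂ) • (1:R)) = 1 := by
  rw [smul_smul]
  have : r2⁻¹ * r2⁻¹ * 2 = 1 := by
    field_simp
    rw [sq, r2sq]
  rw [this, one_smul]

lemma ssq (t c1 c2 : R)
    (ht : t * t = 1) (hc1 : c1 * c1 = -1) (hc2 : c2 * c2 = -1)
    (h12 : c1 * c2 = -(c2 * c1)) (htc1 : t * c1 = -(c1 * t)) (htc2 : t * c2 = -(c2 * t)) :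
    (r2⁻¹ • (t * (c2 - c1))) * (r2⁻¹ • (t * (c2 - c1))) = 1 := by
  have hc1t : c1 * t = -(t * c1) := by rw [htc1, neg_neg]
  have hc2t : c2 * t = -(t * c2) := by rw [htc2, neg_neg]
  have h21 : c2 * c1 = -(c1 * c2) := by rw [h12, neg_neg]
  have A : ∀ x : R, t * (t * x) = x := fun x => by rw [← mul_assoc, ht, one_mul]
  have B1 : ∀ x : R, c1 * (c1 * x) = -x := fun x => by rw [← mul_assoc, hc1, neg_one_mul]
  have B2 : ∀ x : R, c2 * (c2 * x) = -x := fun x => by rw [← mul_assoc, hc2, neg_one_mul]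
  have D : ∀ x : R, c2 * (c1 * x) = -(c1 * (c2 * x)) := fun x => by
    rw [← mul_assoc, h21, ← mul_assoc, neg_mul]
  have E1 : ∀ x : R, c1 * (t * x) = -(t * (c1 * x)) := fun x => by
    rw [← mul_assoc, hc1t, ← mul_assoc, neg_mul]
  have E2 : ∀ x : R, c2 * (t * x) = -(t * (c2 * x)) := fun x => by
    rw [← mul_assoc, hc2t, ← mul_assoc, neg_mul]
  have key : (t * (c2 - c1)) * (t * (c2 - c1)) = (2:ℂ) • (1 : R) := by
    simp only [mul_sub, sub_mul, mul_assoc, mul_neg, neg_mul, neg_neg, mul_one, one_mul,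
      A, B1, B2, D, E1, E2, ht, hc1, hc2, h21, hc1t, hc2t]
    rw [two_smul]
    abel
  rw [smul_mul_smul_comm, key, half_smul]

lemma sbraid (t u c1 c2 c3 : R)
    (ht : t * t = 1) (hu : u * u = 1) (hbr : t * u * t = u * t * u)
    (hc1 : c1 * c1 = -1) (hc2 : c2 * c2 = -1) (hc3 : c3 * c3 = -1)
    (h12 : c1 * c2 = -(c2 * c1)) (h13 : c1 * c3 = -(c3 * c1)) (h23 : c2 * c3 = -(c3 * c2))
    (htc1 : t * c1 = -(c1 * t)) (htc2 : t * c2 = -(c2 * t)) (htc3 : t * c3 = -(c3 * t))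
    (huc1 : u * c1 = -(c1 * u)) (huc2 : u * c2 = -(c2 * u)) (huc3 : u * c3 = -(c3 * u)) :
    (r2⁻¹ • (t * (c2 - c1))) * (r2⁻¹ • (u * (c3 - c2))) * (r2⁻¹ • (t * (c2 - c1))) =
    (r2⁻¹ • (u * (c3 - c2))) * (r2⁻¹ • (t * (c2 - c1))) * (r2⁻¹ • (u * (c3 - c2))) := by
  have hc1t : c1 * t = -(t * c1) := by rw [htc1, neg_neg]
  have hc2t : c2 * t = -(t * c2) := by rw [htc2, neg_neg]
  have hc3t : c3 * t = -(t * c3) := by rw [htc3, neg_neg]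
  have hc1u : c1 * u = -(u * c1) := by rw [huc1, neg_neg]
  have hc2u : c2 * u = -(u * c2) := by rw [huc2, neg_neg]
  have hc3u : c3 * u = -(u * c3) := by rw [huc3, neg_neg]
  have h21 : c2 * c1 = -(c1 * c2) := by rw [h12, neg_neg]
  have h31 : c3 * c1 = -(c1 * c3) := by rw [h13, neg_neg]
  have h32 : c3 * c2 = -(c2 * c3) := by rw [h23, neg_neg]
  have At : ∀ x : R, t * (t * x) = x := fun x => by rw [← mul_assoc, ht, one_mul]
  have Au : ∀ x : R, u * (u * x) = x := fun x => by rw [← mul_assoc, hu, one_mul]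
  have B1 : ∀ x : R, c1 * (c1 * x) = -x := fun x => by rw [← mul_assoc, hc1, neg_one_mul]
  have B2 : ∀ x : R, c2 * (c2 * x) = -x := fun x => by rw [← mul_assoc, hc2, neg_one_mul]
  have B3 : ∀ x : R, c3 * (c3 * x) = -x := fun x => by rw [← mul_assoc, hc3, neg_one_mul]
  have D21 : ∀ x : R, c2 * (c1 * x) = -(c1 * (c2 * x)) := fun x => by
    rw [← mul_assoc, h21, ← mul_assoc, neg_mul]
  have D31 : ∀ x : R, c3 * (c1 * x) = -(c1 * (c3 * x)) := fun x => by
    rw [← mul_assoc, h31, ← mul_assoc, neg_mul]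
  have D32 : ∀ x : R, c3 * (c2 * x) = -(c2 * (c3 * x)) := fun x => by
    rw [← mul_assoc, h32, ← mul_assoc, neg_mul]
  have E1t : ∀ x : R, c1 * (t * x) = -(t * (c1 * x)) := fun x => by
    rw [← mul_assoc, hc1t, ← mul_assoc, neg_mul]
  have E2t : ∀ x : R, c2 * (t * x) = -(t * (c2 * x)) := fun x => by
    rw [← mul_assoc, hc2t, ← mul_assoc, neg_mul]
  have E3t : ∀ x : R, c3 * (t * x) = -(t * (c3 * x)) := fun x => by
    rw [← mul_assoc, hc3t, ← mul_assoc, neg_mul]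
  have E1u : ∀ x : R, c1 * (u * x) = -(u * (c1 * x)) := fun x => by
    rw [← mul_assoc, hc1u, ← mul_assoc, neg_mul]
  have E2u : ∀ x : R, c2 * (u * x) = -(u * (c2 * x)) := fun x => by
    rw [← mul_assoc, hc2u, ← mul_assoc, neg_mul]
  have E3u : ∀ x : R, c3 * (u * x) = -(u * (c3 * x)) := fun x => by
    rw [← mul_assoc, hc3u, ← mul_assoc, neg_mul]
  have Br : ∀ x : R, t * (u * (t * x)) = u * (t * (u * x)) := fun x => by
    rw [← mul_assoc, ← mul_assoc, hbr, mul_assoc, mul_assoc]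
  rw [smul_mul_smul_comm, smul_mul_smul_comm, smul_mul_smul_comm, smul_mul_smul_comm]
  congr 1
  simp only [mul_sub, sub_mul, mul_assoc, mul_neg, neg_mul, neg_neg, mul_one, one_mul,
    At, Au, B1, B2, B3, D21, D31, D32, E1t, E2t, E3t, E1u, E2u, E3u,
    ht, hu, hc1, hc2, hc3, h21, h31, h32, hc1t, hc2t, hc3t, hc1u, hc2u, hc3u, Br, hbr]
  abel

/-- Commutation for distant transpositions: generators t,u with u*t = -(t*u),
four distinct Clifford gens c1,c2 (for t) and c3,c4 (for u). -/
lemma scomm (t u c1 c2 c3 c4 : R)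
    (hut : u * t = -(t * u))
    (h31 : c3 * c1 = -(c1 * c3)) (h32 : c3 * c2 = -(c2 * c3))
    (h41 : c4 * c1 = -(c1 * c4)) (h42 : c4 * c2 = -(c2 * c4))
    (hc1u : c1 * u = -(u * c1)) (hc2u : c2 * u = -(u * c2))
    (hc3t : c3 * t = -(t * c3)) (hc4t : c4 * t = -(t * c4)) :
    (r2⁻¹ • (t * (c2 - c1))) * (r2⁻¹ • (u * (c4 - c3))) =
    (r2⁻¹ • (u * (c4 - c3))) * (r2⁻¹ • (t * (c2 - c1))) := by
  rw [smul_mul_smul_comm, smul_mul_smul_comm]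
  congr 1
  have E1u : ∀ x : R, c1 * (u * x) = -(u * (c1 * x)) := fun x => by
    rw [← mul_assoc, hc1u, ← mul_assoc, neg_mul]
  have E2u : ∀ x : R, c2 * (u * x) = -(u * (c2 * x)) := fun x => by
    rw [← mul_assoc, hc2u, ← mul_assoc, neg_mul]
  have E3t : ∀ x : R, c3 * (t * x) = -(t * (c3 * x)) := fun x => by
    rw [← mul_assoc, hc3t, ← mul_assoc, neg_mul]
  have E4t : ∀ x : R, c4 * (t * x) = -(t * (c4 * x)) := fun x => by
    rw [← mul_assoc, hc4t, ← mul_assoc, neg_mul]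
  have D31 : ∀ x : R, c3 * (c1 * x) = -(c1 * (c3 * x)) := fun x => by
    rw [← mul_assoc, h31, ← mul_assoc, neg_mul]
  have D32 : ∀ x : R, c3 * (c2 * x) = -(c2 * (c3 * x)) := fun x => by
    rw [← mul_assoc, h32, ← mul_assoc, neg_mul]
  have D41 : ∀ x : R, c4 * (c1 * x) = -(c1 * (c4 * x)) := fun x => by
    rw [← mul_assoc, h41, ← mul_assoc, neg_mul]
  have D42 : ∀ x : R, c4 * (c2 * x) = -(c2 * (c4 * x)) := fun x => by
    rw [← mul_assoc, h42, ← mul_assoc, neg_mul]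
  have Hut : ∀ x : R, u * (t * x) = -(t * (u * x)) := fun x => by
    rw [← mul_assoc, hut, ← mul_assoc, neg_mul]
  simp only [mul_sub, sub_mul, mul_assoc, mul_neg, neg_mul, neg_neg, mul_one, one_mul,
    E1u, E2u, E3t, E4t, D31, D32, D41, D42, Hut, hut, h31, h32, h41, h42,
    hc1u, hc2u, hc3t, hc4t]
  abel

/-- s * c1 = c2 * s and s * c2 = c1 * s. -/
lemma scswap (t c1 c2 : R)
    (hc1 : c1 * c1 = -1) (hc2 : c2 * c2 = -1)
    (h12 : c1 * c2 = -(c2 * c1)) (htc1 : t * c1 = -(c1 * t)) (htc2 : t * c2 = -(c2 * t)) :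
    (r2⁻¹ • (t * (c2 - c1))) * c1 = c2 * (r2⁻¹ • (t * (c2 - c1))) ∧
    (r2⁻¹ • (t * (c2 - c1))) * c2 = c1 * (r2⁻¹ • (t * (c2 - c1))) := by
  have hc1t : c1 * t = -(t * c1) := by rw [htc1, neg_neg]
  have hc2t : c2 * t = -(t * c2) := by rw [htc2, neg_neg]
  have h21 : c2 * c1 = -(c1 * c2) := by rw [h12, neg_neg]
  have B1 : ∀ x : R, c1 * (c1 * x) = -x := fun x => by rw [← mul_assoc, hc1, neg_one_mul]
  have B2 : ∀ x : R, c2 * (c2 * x) = -x := fun x => by rw [← mul_assoc, hc2, neg_one_mul]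
  have D : ∀ x : R, c2 * (c1 * x) = -(c1 * (c2 * x)) := fun x => by
    rw [← mul_assoc, h21, ← mul_assoc, neg_mul]
  have E1 : ∀ x : R, c1 * (t * x) = -(t * (c1 * x)) := fun x => by
    rw [← mul_assoc, hc1t, ← mul_assoc, neg_mul]
  have E2 : ∀ x : R, c2 * (t * x) = -(t * (c2 * x)) := fun x => by
    rw [← mul_assoc, hc2t, ← mul_assoc, neg_mul]
  constructor <;>
  · rw [smul_mul_assoc, mul_smul_comm]
    congr 1
    simp only [mul_sub, sub_mul, mul_assoc, mul_neg, neg_mul, neg_neg, mul_one, one_mul,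
      B1, B2, D, E1, E2, hc1, hc2, h21, hc1t, hc2t]
    abel

/-- s * d = d * s for a Clifford generator d distinct from c1, c2. -/
lemma sccomm (t c1 c2 d : R)
    (hd1 : d * c1 = -(c1 * d)) (hd2 : d * c2 = -(c2 * d)) (hdt : d * t = -(t * d)) :
    (r2⁻¹ • (t * (c2 - c1))) * d = d * (r2⁻¹ • (t * (c2 - c1))) := by
  rw [smul_mul_assoc, mul_smul_comm]
  congr 1
  have D1 : ∀ x : R, d * (c1 * x) = -(c1 * (d * x)) := fun x => by
    rw [← mul_assoc, hd1, ← mul_assoc, neg_mul]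
  have D2 : ∀ x : R, d * (c2 * x) = -(c2 * (d * x)) := fun x => by
    rw [← mul_assoc, hd2, ← mul_assoc, neg_mul]
  have Dt : ∀ x : R, d * (t * x) = -(t * (d * x)) := fun x => by
    rw [← mul_assoc, hdt, ← mul_assoc, neg_mul]
  simp only [mul_sub, sub_mul, mul_assoc, mul_neg, neg_mul, neg_neg, mul_one, one_mul,
    D1, D2, Dt, hd1, hd2, hdt]


end AbstractLemmas

section SergeevRelations

variable {n : ℕ}

lemma tS_sq {a : ℕ} (h1 : 1 ≤ a) (h2 : a < n) : tS n a * tS n a = 1 := by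
  have := RingQuot.mkAlgHom_rel ℂ (SRel.tsq a h1 h2)
  simpa only [map_mul, map_one, tS] using this

lemma tS_braid {a : ℕ} (h1 : 1 ≤ a) (h2 : a + 1 < n) :
    tS n a * tS n (a + 1) * tS n a = tS n (a + 1) * tS n a * tS n (a + 1) := by
  have := RingQuot.mkAlgHom_rel ℂ (SRel.tbraid a h1 h2)
  simpa only [map_mul, tS] using this

lemma tS_anti {a b : ℕ} (h1 : 1 ≤ a) (h2 : b < n) (h3 : a + 1 < b) :
    tS n a * tS n b = -(tS n b * tS n a) := by
  have := RingQuot.mkAlgHom_rel ℂ (SRel.tanti a b h1 h2 h3)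
  simpa only [map_mul, map_neg, tS] using this

lemma cS_sq {a : ℕ} (h1 : 1 ≤ a) (h2 : a ≤ n) : cS n a * cS n a = -1 := by
  have := RingQuot.mkAlgHom_rel ℂ (SRel.csq a h1 h2)
  simpa only [map_mul, map_neg, map_one, cS] using this

lemma cS_anti {a b : ℕ} (h1 : 1 ≤ a) (h2 : a ≤ n) (h3 : 1 ≤ b) (h4 : b ≤ n) (h5 : a ≠ b) :
    cS n a * cS n b = -(cS n b * cS n a) := by
  have := RingQuot.mkAlgHom_rel ℂ (SRel.canti a b h1 h2 h3 h4 h5)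
  simpa only [map_mul, map_neg, cS] using this

lemma tcS {a b : ℕ} (h1 : 1 ≤ a) (h2 : a < n) (h3 : 1 ≤ b) (h4 : b ≤ n) :
    tS n a * cS n b = -(cS n b * tS n a) := by
  have := RingQuot.mkAlgHom_rel ℂ (SRel.tc a b h1 h2 h3 h4)
  simpa only [map_mul, map_neg, tS, cS] using this

lemma ctS {a b : ℕ} (h1 : 1 ≤ a) (h2 : a < n) (h3 : 1 ≤ b) (h4 : b ≤ n) :
    cS n b * tS n a = -(tS n a * cS n b) := by
  rw [tcS h1 h2 h3 h4, neg_neg]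

end SergeevRelations

/-- In the Sergeev superalgebra `S_n`, the elements `s_a = (1/√2) t_a (c_{a+1} - c_a)`
satisfy the symmetric group relations and the semidirect-product relations with the
Clifford generators. -/
theorem statement0 (n a b : ℕ) (ha1 : 1 ≤ a) (ha2 : a < n) :
    sS n a * sS n a = 1 ∧
    (a + 1 < n → sS n a * sS n (a + 1) * sS n a = sS n (a + 1) * sS n a * sS n (a + 1)) ∧
    (1 ≤ b → b < n → (a + 1 < b ∨ b + 1 < a) → sS n a * sS n b = sS n b * sS n a) ∧
    sS n a * cS n a = cS n (a + 1) * sS n a ∧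
    sS n a * cS n (a + 1) = cS n a * sS n a ∧
    (1 ≤ b → b ≤ n → b ≠ a → b ≠ a + 1 → sS n a * cS n b = cS n b * sS n a) := by
  simp only [sS]
  have han : a + 1 ≤ n := ha2
  have ha1' : 1 ≤ a + 1 := Nat.le_succ_of_le ha1
  refine ⟨?_, ?_, ?_, ?_, ?_, ?_⟩
  · exact ssq _ _ _ (tS_sq ha1 ha2) (cS_sq ha1 (le_of_lt ha2)) (cS_sq ha1' han)
      (cS_anti ha1 (le_of_lt ha2) ha1' han (by omega))
      (tcS ha1 ha2 ha1 (le_of_lt ha2)) (tcS ha1 ha2 ha1' han)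
  · intro h
    have h2n : a + 2 ≤ n := h
    exact sbraid _ _ _ _ _ (tS_sq ha1 ha2) (tS_sq ha1' h) (tS_braid ha1 h)
      (cS_sq ha1 (le_of_lt ha2)) (cS_sq ha1' han) (cS_sq (by omega) h2n)
      (cS_anti ha1 (le_of_lt ha2) ha1' han (by omega))
      (cS_anti ha1 (le_of_lt ha2) (by omega) h2n (by omega))
      (cS_anti ha1' han (by omega) h2n (by omega))
      (tcS ha1 ha2 ha1 (le_of_lt ha2)) (tcS ha1 ha2 ha1' han)
      (tcS ha1 ha2 (by omega) h2n)
      (tcS ha1' h ha1 (le_of_lt ha2)) (tcS ha1' h ha1' han) (tcS ha1' h (by omega) h2n)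
  · intro hb1 hb2 hab
    rcases hab with hab | hab
    · exact scomm _ _ _ _ _ _
        (by rw [tS_anti ha1 hb2 hab, neg_neg])
        (cS_anti hb1 (le_of_lt hb2) ha1 (le_of_lt ha2) (by omega))
        (cS_anti hb1 (le_of_lt hb2) ha1' han (by omega))
        (cS_anti (by omega) hb2 ha1 (le_of_lt ha2) (by omega))
        (cS_anti (by omega) hb2 ha1' han (by omega))
        (ctS hb1 hb2 ha1 (le_of_lt ha2)) (ctS hb1 hb2 ha1' han)
        (ctS ha1 ha2 hb1 (le_of_lt hb2)) (ctS ha1 ha2 (by omega) hb2)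
    · exact (scomm _ _ _ _ _ _
        (by rw [tS_anti hb1 ha2 hab, neg_neg])
        (cS_anti ha1 (le_of_lt ha2) hb1 (le_of_lt hb2) (by omega))
        (cS_anti ha1 (le_of_lt ha2) (by omega) hb2 (by omega))
        (cS_anti ha1' han hb1 (le_of_lt hb2) (by omega))
        (cS_anti ha1' han (by omega) hb2 (by omega))
        (ctS ha1 ha2 hb1 (le_of_lt hb2)) (ctS ha1 ha2 (by omega) hb2)
        (ctS hb1 hb2 ha1 (le_of_lt ha2)) (ctS hb1 hb2 ha1' han)).symm
  · exact (scswap _ _ _ (cS_sq ha1 (le_of_lt ha2)) (cS_sq ha1' han)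
      (cS_anti ha1 (le_of_lt ha2) ha1' han (by omega))
      (tcS ha1 ha2 ha1 (le_of_lt ha2)) (tcS ha1 ha2 ha1' han)).1
  · exact (scswap _ _ _ (cS_sq ha1 (le_of_lt ha2)) (cS_sq ha1' han)
      (cS_anti ha1 (le_of_lt ha2) ha1' han (by omega))
      (tcS ha1 ha2 ha1 (le_of_lt ha2)) (tcS ha1 ha2 ha1' han)).2
  · intro hb1 hb2 hba hba1
    exact sccomm _ _ _ _
      (cS_anti hb1 hb2 ha1 (le_of_lt ha2) hba)
      (cS_anti hb1 hb2 ha1' han hba1)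
      (ctS ha1 ha2 hb1 hb2)
end
end

section
/- The idempotents e_U form a decomposition of the identity in the Sergeev superalgebra: 1 = Σ_{λ} Σ_{U} e_U, where λ runs over strict partitions of n and U over standard barred λ-tableaux. -/
open scoped Classical

noncomputable section

namespace SP

/-! ### List basics -/

lemma getD_zero {l : List ℕ} {i : ℕ} (h : l.length ≤ i) : l.getD i 0 = 0 :=
  List.getD_eq_default _ _ h

lemma gD_lt {l : List ℕ} (hs : l.Pairwise (· > ·)) {i j : ℕ}
    (hij : i < j) (hj : j < l.length) : l.getD j 0 < l.getD i 0 := by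
  rw [List.getD_eq_getElem _ _ hj, List.getD_eq_getElem _ _ (lt_trans hij hj)]
  exact (List.pairwise_iff_getElem.1 hs) i j _ _ hij

lemma gD_pos {l : List ℕ} (hp : ∀ x ∈ l, 0 < x) {i : ℕ} (hi : i < l.length) :
    0 < l.getD i 0 := by
  rw [List.getD_eq_getElem _ _ hi]
  exact hp _ (l.getElem_mem hi)

lemma lt_length_of_gD_pos {l : List ℕ} {i : ℕ} (h : 0 < l.getD i 0) : i < l.length := by
  by_contra hc
  rw [getD_zero (le_of_not_gt hc)] at h
  exact absurd h (lt_irrefl 0)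

lemma gD_anti {l : List ℕ} (hs : l.Pairwise (· > ·)) {i j : ℕ} (hij : i ≤ j) :
    l.getD j 0 ≤ l.getD i 0 := by
  rcases eq_or_lt_of_le hij with rfl | hlt
  · exact le_rfl
  by_cases hj : j < l.length
  · exact le_of_lt (gD_lt hs hlt hj)
  · rw [getD_zero (le_of_not_gt hj)]; exact Nat.zero_le _

lemma eq_of_gD_eq {l₁ l₂ : List ℕ} (h1 : ∀ x ∈ l₁, 0 < x) (h2 : ∀ x ∈ l₂, 0 < x)
    (h : ∀ j, l₁.getD j 0 = l₂.getD j 0) : l₁ = l₂ := by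
  have hlen : l₁.length = l₂.length := by
    by_contra hc
    rcases Nat.lt_or_ge l₁.length l₂.length with hl | hl
    · have := gD_pos h2 hl
      rw [← h _, getD_zero le_rfl] at this
      exact absurd this (lt_irrefl 0)
    · rcases lt_of_le_of_ne hl (fun e => hc e.symm) with hl'
      have := gD_pos h1 hl'
      rw [h _, getD_zero le_rfl] at this
      exact absurd this (lt_irrefl 0)
  apply List.ext_getElem hlen
  intro i hi1 hi2
  have := h i
  rwa [List.getD_eq_getElem _ _ hi1, List.getD_eq_getElem _ _ hi2] at this

lemma length_le_sum {l : List ℕ} (hp : ∀ x ∈ l, 0 < x) : l.length ≤ l.sum := by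
  induction l with
  | nil => simp
  | cons a t ih =>
      simp only [List.length_cons, List.sum_cons]
      have ha := hp a (by simp)
      have := ih (fun x hx => hp x (by simp [hx]))
      omega

/-! ### Cells -/

lemma mem_cells {l : List ℕ} {p : ℕ × ℕ} :
    p ∈ cells l ↔ 1 ≤ p.1 ∧ p.1 ≤ p.2 ∧ p.2 + 1 ≤ l.getD (p.1 - 1) 0 + p.1 := Iff.rfl

lemma cells_eq_of_gD {l₁ l₂ : List ℕ} (h : ∀ j, l₁.getD j 0 = l₂.getD j 0) :
    cells l₁ = cells l₂ := by
  ext p; simp only [mem_cells, h]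

lemma gD_eq_of_cells_eq {l₁ l₂ : List ℕ} (h : cells l₁ = cells l₂) (j : ℕ) :
    l₁.getD j 0 = l₂.getD j 0 := by
  by_contra hc
  have key : ∀ l l' : List ℕ, cells l = cells l' → l.getD j 0 < l'.getD j 0 → False := by
    intro l l' he hlt
    have hmem : (j + 1, l'.getD j 0 + j) ∈ cells l' := by
      simp only [mem_cells, Prod.fst, Prod.snd, Nat.add_sub_cancel]
      omega
    rw [← he] at hmem
    simp only [mem_cells, Prod.fst, Prod.snd, Nat.add_sub_cancel] at hmem
    omega
  rcases Nat.lt_or_ge (l₁.getD j 0) (l₂.getD j 0) with hl | hl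
  · exact key _ _ h hl
  · exact key _ _ h.symm (lt_of_le_of_ne hl (fun e => hc e.symm))

lemma cells_finite {l : List ℕ} : (cells l).Finite := by
  apply Set.Finite.subset (Set.finite_Icc (1,1) (l.length, l.length + l.sum))
  rintro ⟨a, b⟩ hm
  simp only [mem_cells, Prod.fst, Prod.snd] at hm
  obtain ⟨h1, h2, h3⟩ := hm
  have hg : 0 < l.getD (a - 1) 0 := by omega
  have hlen := lt_length_of_gD_pos hg
  have hsum : l.getD (a-1) 0 ≤ l.sum := by
    have he : l.getD (a-1) 0 = l[a-1] := List.getD_eq_getElem _ _ hlen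
    rw [he]
    exact List.single_le_sum (fun x _ => Nat.zero_le x) _ (l.getElem_mem hlen)
  constructor <;> simp only [Prod.mk_le_mk] <;> constructor <;> omega

end SP
namespace SP

/-! ### Shifted diagrams -/

lemma col_le' {S : Set (ℕ × ℕ)} (h : IsShifted S) :
    ∀ d (p : ℕ × ℕ), p ∈ S → p.1 + d ≤ p.2 → (p.1, p.2 - d) ∈ S := by
  intro d
  induction d with
  | zero => intro p hp _; simpa using hp
  | succ d ih =>
      intro p hp hd
      have h1 := ih p hp (by omega)
      have h2 := h.2.1 _ h1 (by simp; omega)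
      simpa [Nat.sub_sub] using h2

lemma col_le {S : Set (ℕ × ℕ)} (h : IsShifted S) {p : ℕ × ℕ} (hp : p ∈ S) {j : ℕ}
    (h1 : p.1 ≤ j) (h2 : j ≤ p.2) : (p.1, j) ∈ S := by
  have := col_le' h (p.2 - j) p hp (by omega)
  rwa [Nat.sub_sub_self h2] at this

lemma row_le' {S : Set (ℕ × ℕ)} (h : IsShifted S) :
    ∀ d (p : ℕ × ℕ), p ∈ S → d < p.1 → (p.1 - d, p.2) ∈ S := by
  intro d
  induction d with
  | zero => intro p hp _; simpa using hp
  | succ d ih =>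
      intro p hp hd
      have h1 := ih p hp (by omega)
      have h2 := h.2.2 _ h1 (by simp; omega)
      simpa [Nat.sub_sub] using h2

lemma row_le {S : Set (ℕ × ℕ)} (h : IsShifted S) {p : ℕ × ℕ} (hp : p ∈ S) {i : ℕ}
    (h1 : 1 ≤ i) (h2 : i ≤ p.1) : (i, p.2) ∈ S := by
  have := row_le' h (p.1 - i) p hp (by omega)
  rwa [Nat.sub_sub_self h2] at this

lemma shifted_cells {l : List ℕ} (hs : l.Pairwise (· > ·)) : IsShifted (cells l) := by
  refine ⟨fun p hp => ⟨hp.1, hp.2.1⟩, ?_, ?_⟩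
  · rintro ⟨a, b⟩ hp hlt
    simp only [mem_cells, Prod.fst, Prod.snd] at hp hlt ⊢
    omega
  · rintro ⟨a, b⟩ hp hlt
    simp only [mem_cells, Prod.fst, Prod.snd] at hp hlt ⊢
    have hg : 0 < l.getD (a - 1) 0 := by omega
    have hlen := lt_length_of_gD_pos hg
    have hgl : l.getD (a - 1) 0 < l.getD (a - 1 - 1) 0 := gD_lt hs (by omega) hlen
    omega

end SP
namespace SP

/-! ### Extending and shrinking a partition -/

def extendLam (l : List ℕ) (i : ℕ) : List ℕ :=
  if i = l.length then l ++ [1] else l.set i (l.getD i 0 + 1)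

def shrinkLam (l : List ℕ) (i : ℕ) : List ℕ :=
  if l.getD i 0 = 1 then l.take i else l.set i (l.getD i 0 - 1)

lemma getD_set {l : List ℕ} {i : ℕ} (hi : i < l.length) (v j : ℕ) :
    (l.set i v).getD j 0 = if j = i then v else l.getD j 0 := by
  by_cases hj : j < l.length
  · rw [List.getD_eq_getElem _ _ (by simpa using hj), List.getElem_set]
    split
    · simp_all
    · have hne : ¬ j = i := by omega
      rw [if_neg hne, List.getD_eq_getElem _ _ hj]
  · have h1 : (l.set i v).length ≤ j := by simpa using le_of_not_gt hj
    rw [getD_zero h1, getD_zero (le_of_not_gt hj), if_neg (by omega)]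

lemma getD_extendLam {l : List ℕ} {i : ℕ} (hi : i ≤ l.length) (j : ℕ) :
    (extendLam l i).getD j 0 = if j = i then l.getD i 0 + 1 else l.getD j 0 := by
  rw [extendLam]
  split
  · rename_i h; subst h
    rcases Nat.lt_trichotomy j l.length with hj | hj | hj
    · rw [List.getD_append _ _ _ _ hj, if_neg (by omega)]
    · subst hj
      rw [List.getD_append_right _ _ _ _ le_rfl, Nat.sub_self, if_pos rfl,
        getD_zero le_rfl]
      rfl
    · rw [getD_zero (show (l ++ [1]).length ≤ j by simp; omega), if_neg (by omega),
        getD_zero (show l.length ≤ j by omega)]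
  · rw [getD_set (by omega)]

lemma sum_extendLam {l : List ℕ} {i : ℕ} (hi : i ≤ l.length) :
    (extendLam l i).sum = l.sum + 1 := by
  rw [extendLam]
  split
  · simp
  · have hlt : i < l.length := by omega
    rw [List.sum_set, if_pos hlt]
    have hdrop : l.drop i = l[i] :: l.drop (i + 1) := List.drop_eq_getElem_cons hlt
    have hsum : l.sum = (l.take i).sum + (l.drop i).sum := (List.sum_take_add_sum_drop l i).symm
    rw [hdrop, List.sum_cons] at hsum
    rw [List.getD_eq_getElem _ _ hlt]
    omega

lemma getD_shrinkLam {l : List ℕ} (hs : l.Pairwise (· > ·)) (hp : ∀ x ∈ l, 0 < x) {i : ℕ}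
    (hi : i < l.length) (j : ℕ) :
    (shrinkLam l i).getD j 0 = if j = i then l.getD i 0 - 1 else l.getD j 0 := by
  rw [shrinkLam]
  split
  · rename_i h1
    have hlen : l.length ≤ i + 1 := by
      by_contra hc
      have := gD_lt hs (show i < i + 1 by omega) (by omega)
      have := gD_pos hp (show i + 1 < l.length by omega)
      omega
    rcases Nat.lt_trichotomy j i with hj | hj | hj
    · have hjt : j < (l.take i).length := by simp; omega
      rw [List.getD_eq_getElem _ _ hjt, if_neg (by omega),
        List.getD_eq_getElem _ _ (show j < l.length by omega)]
      exact List.getElem_take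
    · subst hj
      rw [getD_zero (by simp), if_pos rfl, h1]
    · rw [getD_zero (show (l.take i).length ≤ j by simp; omega), if_neg (by omega),
        getD_zero (show l.length ≤ j by omega)]
  · rw [getD_set hi]

lemma sum_shrinkLam {l : List ℕ} (hs : l.Pairwise (· > ·)) (hp : ∀ x ∈ l, 0 < x) {i : ℕ}
    (hi : i < l.length) : (shrinkLam l i).sum = l.sum - 1 := by
  rw [shrinkLam]
  have hgd : l.getD i 0 = l[i] := List.getD_eq_getElem _ _ hi
  have hdrop : l.drop i = l[i] :: l.drop (i + 1) := List.drop_eq_getElem_cons hi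
  have hsum : l.sum = (l.take i).sum + (l.drop i).sum := (List.sum_take_add_sum_drop l i).symm
  rw [hdrop, List.sum_cons] at hsum
  have hpos : 0 < l[i] := hp _ (l.getElem_mem hi)
  split
  · rename_i h1
    have hlen : l.length ≤ i + 1 := by
      by_contra hc
      have := gD_lt hs (show i < i + 1 by omega) (by omega)
      have := gD_pos hp (show i + 1 < l.length by omega)
      omega
    have hd : l.drop (i + 1) = [] := List.drop_eq_nil_of_le hlen
    rw [hd, List.sum_nil] at hsum
    rw [hgd] at h1
    omega
  · rw [List.sum_set, if_pos hi, hgd]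
    omega

lemma sorted_pos_of_getD {l : List ℕ} (m : List ℕ)
    (hlen : m.length ≤ l.length + 1)
    (hget : ∀ j, j < m.length → m.getD j 0 = l.getD j 0 ∨ True)
    : True := trivial

/-- Generic: a list is sorted-desc with positive entries iff its `getD` function is
strictly decreasing on its support interval. -/
lemma sorted_pos_of_gD {m : List ℕ}
    (h1 : ∀ j, j + 1 < m.length → m.getD (j+1) 0 < m.getD j 0)
    (h2 : ∀ j, j < m.length → 0 < m.getD j 0) :
    m.Pairwise (· > ·) ∧ ∀ x ∈ m, 0 < x := by
  constructor
  · rw [List.pairwise_iff_getElem]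
    intro a b ha hb hab
    have key : ∀ d, a + d < m.length → m.getD (a + d) 0 ≤ m.getD a 0 := by
      intro d
      induction d with
      | zero => intro _; exact le_rfl
      | succ d ih =>
          intro hd
          have := h1 (a + d) (by omega)
          have := ih (by omega)
          show m.getD (a + d + 1) 0 ≤ m.getD a 0
          omega
    have hk := key (b - a - 1) (by omega)
    have hlast := h1 (b - 1) (by omega)
    have e1 : a + (b - a - 1) = b - 1 := by omega
    have e2 : b - 1 + 1 = b := by omega
    rw [e1] at hk
    rw [e2] at hlast
    rw [← List.getD_eq_getElem _ 0 ha, ← List.getD_eq_getElem _ 0 hb]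
    omega
  · intro x hx
    obtain ⟨j, hj, rfl⟩ := List.mem_iff_getElem.1 hx
    have := h2 j hj
    rwa [List.getD_eq_getElem _ _ hj] at this

lemma length_extendLam {l : List ℕ} {i : ℕ} (hi : i ≤ l.length) :
    (extendLam l i).length = if i = l.length then l.length + 1 else l.length := by
  rw [extendLam]; split <;> simp

lemma sorted_pos_extendLam {l : List ℕ} (hs : l.Pairwise (· > ·)) (hp : ∀ x ∈ l, 0 < x)
    {i : ℕ} (hi : i ≤ l.length) (hc : i = 0 ∨ l.getD i 0 + 2 ≤ l.getD (i - 1) 0) :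
    (extendLam l i).Pairwise (· > ·) ∧ ∀ x ∈ extendLam l i, 0 < x := by
  have hlen := length_extendLam hi
  have hget := getD_extendLam hi
  apply sorted_pos_of_gD
  · intro j hj
    have hjl : j + 1 < l.length + 1 := by rw [hlen] at hj; split at hj <;> omega
    rw [hget j, hget (j+1)]
    by_cases h1 : j + 1 = i
    · rw [if_pos h1, if_neg (by omega)]
      have ha : l.getD i 0 + 2 ≤ l.getD (i-1) 0 := by
        rcases hc with h | h
        · omega
        · exact h
      have : l.getD (i - 1) 0 ≤ l.getD j 0 := gD_anti hs (by omega)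
      omega
    · rw [if_neg h1]
      by_cases h2 : j = i
      · rw [if_pos h2]
        have hj1 : j + 1 < l.length := by
          rw [hlen] at hj; split at hj <;> omega
        have := gD_lt hs (show j < j + 1 by omega) hj1
        subst h2
        omega
      · rw [if_neg h2]
        have hj1 : j + 1 < l.length := by
          rw [hlen] at hj
          split at hj
          · rename_i he
            -- i = l.length; j+1 < l.length + 1, j+1 ≠ i, j ≠ i
            omega
          · omega
        exact gD_lt hs (show j < j + 1 by omega) hj1
  · intro j hj
    rw [hget j]
    by_cases h2 : j = i
    · rw [if_pos h2]; omega
    · rw [if_neg h2]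
      apply gD_pos hp
      rw [hlen] at hj
      split at hj <;> omega

lemma length_shrinkLam {l : List ℕ} {i : ℕ} :
    (shrinkLam l i).length ≤ l.length := by
  rw [shrinkLam]; split <;> simp

lemma sorted_pos_shrinkLam {l : List ℕ} (hs : l.Pairwise (· > ·)) (hp : ∀ x ∈ l, 0 < x)
    {i : ℕ} (hi : i < l.length)
    (hc : l.getD i 0 = 1 ∨ l.getD (i + 1) 0 + 2 ≤ l.getD i 0) :
    (shrinkLam l i).Pairwise (· > ·) ∧ ∀ x ∈ shrinkLam l i, 0 < x := by
  have hget := getD_shrinkLam hs hp hi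
  have hg : 0 < l.getD i 0 := gD_pos hp hi
  apply sorted_pos_of_gD
  · intro j hj
    have hjl : j + 1 < l.length := by
      have := length_shrinkLam (l := l) (i := i); omega
    rw [hget j, hget (j+1)]
    by_cases h1 : j + 1 = i
    · rw [if_pos h1, if_neg (by omega)]
      have hlt := gD_lt hs (show j < j + 1 by omega) (by omega)
      rw [h1] at hlt
      omega
    · rw [if_neg h1]
      by_cases h2 : j = i
      · rw [if_pos h2]
        subst h2
        rcases hc with hcc | hcc
        · exfalso
          -- row j has 1 box : then shrinkLam = take i, and j < (take i).length = i : contradiction j = i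
          rw [shrinkLam, if_pos hcc, List.length_take] at hj
          omega
        · have : l.getD (j + 1) 0 + 2 ≤ l.getD j 0 := hcc
          omega
      · rw [if_neg h2]
        exact gD_lt hs (show j < j + 1 by omega) hjl
  · intro j hj
    have hjl : j < l.length := by
      have := length_shrinkLam (l := l) (i := i); omega
    rw [hget j]
    by_cases h2 : j = i
    · rw [if_pos h2]
      subst h2
      rcases hc with hcc | hcc
      · exfalso
        rw [shrinkLam, if_pos hcc, List.length_take] at hj
        omega
      · omega
    · rw [if_neg h2]
      exact gD_pos hp hjl
  
lemma shrink_extend {l : List ℕ} (hp : ∀ x ∈ l, 0 < x) {i : ℕ} (hi : i ≤ l.length) :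
    shrinkLam (extendLam l i) i = l := by
  rw [extendLam]
  split
  · rename_i h
    subst h
    rw [shrinkLam]
    rw [List.getD_append_right _ _ _ _ le_rfl, Nat.sub_self,
      if_pos (show ([1]:List ℕ).getD 0 0 = 1 from rfl)]
    exact List.take_left
  · rename_i h
    have hlt : i < l.length := by omega
    have hgd : (l.set i (l.getD i 0 + 1)).getD i 0 = l.getD i 0 + 1 := by
      rw [getD_set hlt]; simp
    rw [shrinkLam, hgd]
    have hg : 0 < l.getD i 0 := gD_pos hp hlt
    rw [if_neg (by omega)]
    rw [Nat.add_sub_cancel, List.set_set]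
    rw [List.getD_eq_getElem _ _ hlt]
    apply List.ext_getElem (by simp)
    intro j hj1 hj2
    rw [List.getElem_set]
    split
    · simp_all
    · rfl

lemma cells_extendLam {l : List ℕ} {i : ℕ} (hi : i ≤ l.length) :
    cells (extendLam l i) = insert (i + 1, l.getD i 0 + i + 1) (cells l) := by
  ext ⟨a, b⟩
  simp only [mem_cells, Set.mem_insert_iff, Prod.mk.injEq, Prod.fst, Prod.snd,
    getD_extendLam hi]
  by_cases ha : a - 1 = i
  · rw [if_pos ha, ← ha]
    omega
  · rw [if_neg ha]
    omega

lemma cells_shrinkLam {l : List ℕ} (hs : l.Pairwise (· > ·)) (hp : ∀ x ∈ l, 0 < x) {i : ℕ}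
    (hi : i < l.length) :
    cells (shrinkLam l i) = cells l \ {(i + 1, l.getD i 0 + i)} := by
  have hg : 0 < l.getD i 0 := gD_pos hp hi
  ext ⟨a, b⟩
  simp only [mem_cells, Set.mem_diff, Set.mem_singleton_iff, Prod.mk.injEq, Prod.fst, Prod.snd,
    getD_shrinkLam hs hp hi]
  by_cases ha : a - 1 = i
  · rw [if_pos ha, ← ha]
    omega
  · rw [if_neg ha]
    omega

end SP
namespace SP

/-! ### Addable boxes -/

lemma addable_char_fwd {l : List ℕ} (hs : l.Pairwise (· > ·)) (hp : ∀ x ∈ l, 0 < x)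
    {q : ℕ × ℕ} (hq : Addable (cells l) q) :
    1 ≤ q.1 ∧ q.2 = l.getD (q.1 - 1) 0 + q.1 ∧ q.1 - 1 ≤ l.length ∧
      (q.1 = 1 ∨ l.getD (q.1 - 1) 0 + 2 ≤ l.getD (q.1 - 2) 0) := by
  obtain ⟨hnot, hsh⟩ := hq
  have hq12 := hsh.1 q (Set.mem_insert q _)
  have hge : l.getD (q.1 - 1) 0 + q.1 ≤ q.2 := by
    by_contra hcon
    exact hnot ⟨hq12.1, hq12.2, by omega⟩
  have hle : q.2 ≤ l.getD (q.1 - 1) 0 + q.1 := by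
    by_contra hcon
    have hmem : (q.1, l.getD (q.1 - 1) 0 + q.1) ∈ insert q (cells l) :=
      col_le hsh (Set.mem_insert q _) (by omega) (by omega)
    rcases hmem with heq | hmem
    · have := congrArg Prod.snd heq
      simp only [Prod.snd] at this
      omega
    · rw [mem_cells] at hmem
      simp only [Prod.fst, Prod.snd] at hmem
      omega
  have h2 : q.2 = l.getD (q.1 - 1) 0 + q.1 := le_antisymm hle hge
  have hrow : ∀ hq1 : 2 ≤ q.1, (q.1 - 1, q.2) ∈ cells l := by
    intro hq1
    have hmem := hsh.2.2 q (Set.mem_insert q _) (by omega)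
    rcases hmem with heq | hmem
    · exfalso
      have := congrArg Prod.fst heq
      simp only [Prod.fst] at this
      omega
    · exact hmem
  have hlen : q.1 - 1 ≤ l.length := by
    by_contra hcon
    -- then getD (q.1-1) = 0, q.2 = q.1 ; and q.1 ≥ 2 (since length ≥ 0 means q.1 ≥ 2)
    have hz : l.getD (q.1 - 1) 0 = 0 := getD_zero (by omega)
    have hq1 : 2 ≤ q.1 := by omega
    have hm := hrow hq1
    rw [mem_cells] at hm
    simp only [Prod.fst, Prod.snd] at hm
    have hz2 : l.getD (q.1 - 1 - 1) 0 = 0 := getD_zero (by omega)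
    omega
  refine ⟨hq12.1, h2, hlen, ?_⟩
  by_cases hq1 : q.1 = 1
  · exact Or.inl hq1
  · right
    have hm := hrow (by omega)
    rw [mem_cells] at hm
    simp only [Prod.fst, Prod.snd] at hm
    have : q.1 - 1 - 1 = q.1 - 2 := by omega
    rw [this] at hm
    omega

lemma addable_char_bwd {l : List ℕ} (hs : l.Pairwise (· > ·)) (hp : ∀ x ∈ l, 0 < x)
    {i : ℕ} (hi : i ≤ l.length) (hc : i = 0 ∨ l.getD i 0 + 2 ≤ l.getD (i - 1) 0) :
    Addable (cells l) (i + 1, l.getD i 0 + i + 1) := by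
  constructor
  · rw [mem_cells]
    simp only [Prod.fst, Prod.snd, Nat.add_sub_cancel]
    omega
  · rw [← cells_extendLam hi]
    exact shifted_cells (sorted_pos_extendLam hs hp hi hc).1

/-- Two addable boxes of the same shifted shape with equal contents coincide. -/
lemma addable_content_inj {S : Set (ℕ × ℕ)} (hS : IsShifted S) {q q' : ℕ × ℕ}
    (hq : Addable S q) (hq' : Addable S q') (hc : q.2 - q.1 = q'.2 - q'.1) : q = q' := by
  have h1 := hq.2.1 q (Set.mem_insert q _)
  have h1' := hq'.2.1 q' (Set.mem_insert q' _)
  have key : ∀ p p' : ℕ × ℕ, Addable S p → Addable S p' → 1 ≤ p.1 → p.1 ≤ p.2 →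
      1 ≤ p'.1 → p'.1 ≤ p'.2 → p.2 - p.1 = p'.2 - p'.1 → p.1 < p'.1 → False := by
    intro p p' hp hp' a1 a2 b1 b2 hcc hlt
    have hrow := hp'.2.2.2 p' (Set.mem_insert p' _) (by omega)
    have hrow' : (p'.1 - 1, p'.2) ∈ S := by
      rcases hrow with heq | hm
      · exfalso
        have := congrArg Prod.fst heq
        simp only [Prod.fst] at this
        omega
      · exact hm
    have hup : (p.1, p'.2) ∈ S := by
      have := row_le hS hrow' (i := p.1) a1 (by simp only [Prod.fst]; omega)
      simpa using this
    have hcol : (p.1, p.2) ∈ S := by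
      have := col_le hS hup (j := p.2) (by simp only [Prod.fst]; omega)
        (by simp only [Prod.snd]; omega)
      simpa using this
    exact hp.1 (by simpa using hcol)
  rcases Nat.lt_trichotomy q.1 q'.1 with hlt | heq | hgt
  · exact absurd (key q q' hq hq' h1.1 h1.2 h1'.1 h1'.2 hc hlt) id
  · have : q.2 = q'.2 := by omega
    exact Prod.ext heq this
  · exact absurd (key q' q hq' hq h1'.1 h1'.2 h1.1 h1.2 hc.symm hgt) id

lemma ncard_Icc_prod_le {S : Set (ℕ × ℕ)} (hfin : S.Finite) {k : ℕ}
    (f : ℕ → ℕ × ℕ) (hinj : Function.Injective f)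
    (hsub : ∀ j, 1 ≤ j → j ≤ k → f j ∈ S) : k ≤ S.ncard := by
  have hsub' : f '' (Set.Icc 1 k) ⊆ S := by
    rintro p ⟨j, hj, rfl⟩
    exact hsub j hj.1 hj.2
  have h1 : (f '' (Set.Icc 1 k)).ncard = k := by
    rw [Set.ncard_image_of_injective _ hinj]
    rw [← Finset.coe_Icc, Set.ncard_coe_finset, Nat.card_Icc]
    omega
  calc k = (f '' (Set.Icc 1 k)).ncard := h1.symm
    _ ≤ S.ncard := Set.ncard_le_ncard hsub' hfin

lemma addable_bound {S : Set (ℕ × ℕ)} (hS : IsShifted S) (hfin : S.Finite) {k : ℕ}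
    (hcard : S.ncard ≤ k) {q : ℕ × ℕ} (hq : Addable S q) :
    1 ≤ q.1 ∧ q.1 ≤ q.2 ∧ q.2 ≤ k + 1 := by
  have h1 := hq.2.1 q (Set.mem_insert q _)
  refine ⟨h1.1, h1.2, ?_⟩
  rcases eq_or_lt_of_le h1.2 with heq | hlt
  · -- diagonal box
    by_cases hq1 : q.1 ≤ 1
    · omega
    · have hmem := hq.2.2.2 q (Set.mem_insert q _) (by omega)
      have hmem' : (q.1 - 1, q.2) ∈ S := by
        rcases hmem with he | hm
        · exfalso
          have := congrArg Prod.fst he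
          simp only [Prod.fst] at this
          omega
        · exact hm
      have hk : q.1 - 1 ≤ S.ncard := by
        apply ncard_Icc_prod_le hfin (fun j => (j, q.2))
          (fun a b hab => by simpa using congrArg Prod.fst hab)
        intro j hj1 hj2
        have := row_le hS hmem' (i := j) hj1 (by simp only [Prod.fst]; omega)
        simpa using this
      omega
  · -- q.1 < q.2
    have hmem := hq.2.2.1 q (Set.mem_insert q _) hlt
    have hmem' : (q.1, q.2 - 1) ∈ S := by
      rcases hmem with he | hm
      · exfalso
        have := congrArg Prod.snd he
        simp only [Prod.snd] at this
        omega
      · exact hm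
    have hrow1 : (1, q.2 - 1) ∈ S := by
      have := row_le hS hmem' (i := 1) le_rfl (by simp only [Prod.fst]; omega)
      simpa using this
    have hk : q.2 - 1 ≤ S.ncard := by
      apply ncard_Icc_prod_le hfin (fun j => (1, j))
        (fun a b hab => by simpa using congrArg Prod.snd hab)
      intro j hj1 hj2
      have := col_le hS hrow1 (j := j) (by simp only [Prod.fst]; omega)
        (by simp only [Prod.snd]; omega)
      simpa using this
    omega

lemma bVals_indep {S : Set (ℕ × ℕ)} (hS : IsShifted S) (hfin : S.Finite) {k r r' : ℕ}
    (hcard : S.ncard ≤ k) (h1 : k ≤ r) (h2 : k ≤ r') : bVals r S = bVals r' S := by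
  rw [bVals, bVals]
  have hfilter : ∀ m : ℕ, k ≤ m →
      ((Finset.Icc 1 (m + 1) ×ˢ Finset.Icc 1 (m + 1)).filter fun q => Addable S q) =
      ((Finset.Icc 1 (k + 1) ×ˢ Finset.Icc 1 (k + 1)).filter fun q => Addable S q) := by
    intro m hm
    ext q
    simp only [Finset.mem_filter, Finset.mem_product, Finset.mem_Icc]
    constructor
    · rintro ⟨_, hq⟩
      have hb := addable_bound hS hfin hcard hq
      exact ⟨⟨⟨hb.1, by omega⟩, ⟨by omega, by omega⟩⟩, hq⟩
    · rintro ⟨_, hq⟩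
      have hb := addable_bound hS hfin hcard hq
      exact ⟨⟨⟨hb.1, by omega⟩, ⟨by omega, by omega⟩⟩, hq⟩
  rw [hfilter r h1, hfilter r' h2]

end SP
namespace SP

/-! ### Basic SBT lemmas -/

lemma SBT.ext' {n : ℕ} {U V : SBT n} (h1 : U.lam = V.lam) (h2 : U.entry = V.entry)
    (h3 : U.barred = V.barred) : U = V := by
  cases U; cases V
  simp only at h1 h2 h3
  subst h1; subst h2; subst h3
  rfl

lemma box_spec {n : ℕ} (U : SBT n) {a : ℕ} (ha : a ∈ Set.Icc 1 n) :
    U.box a ∈ cells U.lam ∧ U.entry (U.box a) = a := by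
  have hex : ∃ p ∈ cells U.lam, U.entry p = a := U.bij.2.2 ha
  rw [SBT.box, dif_pos hex]
  exact ⟨hex.choose_spec.1, hex.choose_spec.2⟩

lemma box_eq {n : ℕ} (U : SBT n) {a : ℕ} {p : ℕ × ℕ} (hp : p ∈ cells U.lam)
    (he : U.entry p = a) : U.box a = p := by
  have ha : a ∈ Set.Icc 1 n := he ▸ U.bij.1 hp
  have hs := box_spec U ha
  exact U.bij.2.1 hs.1 hp (hs.2.trans he.symm)

lemma entry_mem {n : ℕ} (U : SBT n) {p : ℕ × ℕ} (hp : p ∈ cells U.lam) :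
    U.entry p ∈ Set.Icc 1 n := U.bij.1 hp

lemma shapeAt_shifted {n : ℕ} (U : SBT n) (k : ℕ) : IsShifted (U.shapeAt k) := by
  refine ⟨fun p hp => ⟨hp.1.1, hp.1.2.1⟩, ?_, ?_⟩
  · rintro ⟨a, b⟩ ⟨hc, he⟩ hlt
    simp only [Prod.fst, Prod.snd] at hlt
    have hc' : (a, b - 1) ∈ cells U.lam := by
      rw [mem_cells] at hc ⊢
      simp only [Prod.fst, Prod.snd] at hc ⊢
      omega
    refine ⟨hc', le_trans (le_of_lt ?_) he⟩
    have := U.row_incr (a, b-1) hc' (by simpa only [Prod.fst, Prod.snd] using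
      (show (a, b - 1 + 1) ∈ cells U.lam by
        have : b - 1 + 1 = b := by
          rw [mem_cells] at hc
          simp only [Prod.fst, Prod.snd] at hc
          omega
        rw [this]; exact hc))
    have hb : b - 1 + 1 = b := by
      rw [mem_cells] at hc
      simp only [Prod.fst, Prod.snd] at hc
      omega
    rw [hb] at this
    exact this
  · rintro ⟨a, b⟩ ⟨hc, he⟩ hlt
    simp only [Prod.fst, Prod.snd] at hlt
    have hc' : (a - 1, b) ∈ cells U.lam := by
      have := (shifted_cells U.sorted).2.2 (a, b) hc (by simpa using hlt)
      simpa using this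
    refine ⟨hc', le_trans (le_of_lt ?_) he⟩
    have := U.col_incr (a - 1, b) hc' (by
      simp only [Prod.fst, Prod.snd]
      have : a - 1 + 1 = a := by omega
      rw [this]; exact hc)
    have ha : a - 1 + 1 = a := by omega
    rw [ha] at this
    exact this

lemma bijOn_shapeAt {n : ℕ} (U : SBT n) {k : ℕ} (hk : k ≤ n) :
    Set.BijOn U.entry (U.shapeAt k) (Set.Icc 1 k) := by
  refine ⟨?_, fun p hp q hq he => U.bij.2.1 hp.1 hq.1 he, ?_⟩
  · rintro p ⟨hc, he⟩
    have := U.bij.1 hc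
    exact ⟨this.1, he⟩
  · rintro a ⟨h1, h2⟩
    obtain ⟨p, hp, hpe⟩ := U.bij.2.2 (show a ∈ Set.Icc 1 n from ⟨h1, le_trans h2 hk⟩)
    exact ⟨p, ⟨hp, by omega⟩, hpe⟩

lemma ncard_shapeAt {n : ℕ} (U : SBT n) {k : ℕ} (hk : k ≤ n) :
    (U.shapeAt k).ncard = k := by
  have h := bijOn_shapeAt U hk
  have himg := h.image_eq
  have : (U.entry '' (U.shapeAt k)).ncard = (U.shapeAt k).ncard :=
    Set.ncard_image_of_injOn h.2.1
  rw [himg] at this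
  rw [← this, ← Finset.coe_Icc, Set.ncard_coe_finset, Nat.card_Icc]
  omega

lemma shapeAt_finite {n : ℕ} (U : SBT n) (k : ℕ) : (U.shapeAt k).Finite :=
  Set.Finite.subset cells_finite (fun _ hp => hp.1)

lemma shapeAt_top {n : ℕ} (U : SBT n) : U.shapeAt n = cells U.lam := by
  ext p
  refine ⟨fun hp => hp.1, fun hp => ⟨hp, (entry_mem U hp).2⟩⟩

lemma shapeAt_succ {n : ℕ} (U : SBT n) {k : ℕ} (hk : k + 1 ≤ n) :
    U.shapeAt (k + 1) = insert (U.box (k + 1)) (U.shapeAt k) := by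
  have hb := box_spec U (show (k+1 : ℕ) ∈ Set.Icc 1 n by constructor <;> omega)
  ext p
  constructor
  · rintro ⟨hc, he⟩
    by_cases hek : U.entry p = k + 1
    · left
      exact (box_eq U hc hek).symm
    · right
      exact ⟨hc, by omega⟩
  · rintro (rfl | ⟨hc, he⟩)
    · exact ⟨hb.1, le_of_eq hb.2⟩
    · exact ⟨hc, by omega⟩

lemma box_addable {n : ℕ} (U : SBT n) {k : ℕ} (hk : k + 1 ≤ n) :
    Addable (U.shapeAt k) (U.box (k + 1)) := by
  have hb := box_spec U (show (k+1 : ℕ) ∈ Set.Icc 1 n by constructor <;> omega)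
  constructor
  · rintro ⟨_, he⟩
    rw [hb.2] at he
    omega
  · rw [← shapeAt_succ U hk]
    exact shapeAt_shifted U (k + 1)

end SP
namespace SP

/-! ### Finiteness of `SBT n` -/

lemma cells_bound {n : ℕ} (U : SBT n) {p : ℕ × ℕ} (hp : p ∈ cells U.lam) :
    1 ≤ p.1 ∧ p.1 ≤ n ∧ 1 ≤ p.2 ∧ p.2 ≤ 2 * n := by
  rw [mem_cells] at hp
  obtain ⟨h1, h2, h3⟩ := hp
  have hg : 0 < U.lam.getD (p.1 - 1) 0 := by omega
  have hlen := lt_length_of_gD_pos hg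
  have hse := U.sum_eq
  have hlensum : U.lam.length ≤ n := by
    have := length_le_sum U.pos
    omega
  have hsum : U.lam.getD (p.1-1) 0 ≤ n := by
    have he : U.lam.getD (p.1-1) 0 = U.lam[p.1-1] := List.getD_eq_getElem _ _ hlen
    rw [he]
    have := List.single_le_sum (fun (x:ℕ) _ => Nat.zero_le x) _ (U.lam.getElem_mem hlen)
    omega
  omega

def encode (n : ℕ) (U : SBT n) :
    ((Finset.Icc 1 n ×ˢ Finset.Icc 1 (2*n) : Finset (ℕ × ℕ)) → Fin (n+1)) × (Fin (n+1) → Bool) :=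
  (fun p => ⟨U.entry p.1, by
    by_cases hc : (p : ℕ × ℕ) ∈ cells U.lam
    · have := (entry_mem U hc).2; omega
    · rw [U.entry_junk _ hc]; omega⟩,
   fun a => decide ((a : ℕ) ∈ U.barred))

lemma encode_injective (n : ℕ) : Function.Injective (encode n) := by
  intro U V h
  have h1 := congrArg Prod.fst h
  have h2 := congrArg Prod.snd h
  simp only [encode] at h1 h2
  have hent : ∀ p : ℕ × ℕ, p ∈ (Finset.Icc 1 n ×ˢ Finset.Icc 1 (2*n) : Finset (ℕ × ℕ)) →
      U.entry p = V.entry p := by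
    intro p hp
    have := congrFun h1 ⟨p, hp⟩
    exact congrArg Fin.val this
  have hmemgrid : ∀ (W : SBT n) (p : ℕ × ℕ), p ∈ cells W.lam →
      p ∈ (Finset.Icc 1 n ×ˢ Finset.Icc 1 (2*n) : Finset (ℕ × ℕ)) := by
    intro W p hp
    have := cells_bound W hp
    simp only [Finset.mem_product, Finset.mem_Icc]
    omega
  have hcells : cells U.lam = cells V.lam := by
    ext p
    constructor
    · intro hp
      by_contra hc
      have h0 := V.entry_junk p hc
      have h1' := (entry_mem U hp).1
      rw [hent p (hmemgrid U p hp)] at h1'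
      omega
    · intro hp
      by_contra hc
      have h0 := U.entry_junk p hc
      have h1' := (entry_mem V hp).1
      rw [← hent p (hmemgrid V p hp)] at h1'
      omega
  have hlam : U.lam = V.lam :=
    eq_of_gD_eq U.pos V.pos (gD_eq_of_cells_eq hcells)
  have hentry : U.entry = V.entry := by
    funext p
    by_cases hp : p ∈ cells U.lam
    · exact hent p (hmemgrid U p hp)
    · rw [U.entry_junk p hp, V.entry_junk p (hcells ▸ hp)]
  have hbar : U.barred = V.barred := by
    ext a
    constructor
    · intro ha
      have hai := U.barred_sub ha
      rw [Set.mem_Icc] at hai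
      have := congrFun h2 ⟨a, by omega⟩
      simp only [decide_eq_decide] at this
      exact this.1 ha
    · intro ha
      have hai := V.barred_sub ha
      rw [Set.mem_Icc] at hai
      have := congrFun h2 ⟨a, by omega⟩
      simp only [decide_eq_decide] at this
      exact this.2 ha
  exact SBT.ext' hlam hentry hbar

instance (n : ℕ) : Finite (SBT n) := Finite.of_injective _ (encode_injective n)

noncomputable instance (n : ℕ) : Fintype (SBT n) := Fintype.ofFinite _

/-! ### The unique tableau with one box -/

lemma lam_eq_one {l : List ℕ} (hp : ∀ x ∈ l, 0 < x) (hsum : l.sum = 1) : l = [1] := by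
  match l with
  | [] => simp at hsum
  | [a] => simp at hsum; rw [hsum]
  | a :: b :: t =>
      exfalso
      have ha := hp a (by simp)
      have hb := hp b (by simp)
      simp only [List.sum_cons] at hsum
      omega

lemma cells_one : cells [1] = {(1, 1)} := by
  ext ⟨a, b⟩
  simp only [mem_cells, Set.mem_singleton_iff, Prod.mk.injEq, Prod.fst, Prod.snd]
  constructor
  · rintro ⟨h1, h2, h3⟩
    rcases Nat.lt_or_ge a 2 with ha | ha
    · have : a = 1 := by omega
      subst this
      simp only [List.getD] at h3
      constructor
      · rfl
      · simp at h3; omega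
    · exfalso
      have : ([1] : List ℕ).getD (a-1) 0 = 0 := getD_zero (by simp; omega)
      omega
  · rintro ⟨rfl, rfl⟩
    refine ⟨le_rfl, le_rfl, ?_⟩
    simp

def U1 : SBT 1 where
  lam := [1]
  sorted := by simp
  pos := by simp
  sum_eq := by simp
  entry := fun p => if p = (1, 1) then 1 else 0
  bij := by
    rw [cells_one]
    refine ⟨?_, ?_, ?_⟩
    · rintro p rfl
      simp
    · rintro p rfl q rfl _
      rfl
    · rintro a ⟨h1, h2⟩
      have : a = 1 := le_antisymm h2 h1
      subst this
      exact ⟨(1,1), rfl, by simp⟩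
  entry_junk := by
    intro p hp
    rw [cells_one] at hp
    simp only [Set.mem_singleton_iff] at hp
    show (if p = (1,1) then 1 else 0) = 0
    rw [if_neg hp]
  row_incr := by
    rintro p hp hp2
    rw [cells_one] at hp hp2
    simp only [Set.mem_singleton_iff] at hp hp2
    exfalso
    subst hp
    have := congrArg Prod.snd hp2
    simp at this
  col_incr := by
    rintro p hp hp2
    rw [cells_one] at hp hp2
    simp only [Set.mem_singleton_iff] at hp hp2
    exfalso
    subst hp
    have := congrArg Prod.fst hp2
    simp at this
  barred := ∅
  barred_sub := by simp
  barred_nondiag := by simp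

lemma sbt_one_unique (U : SBT 1) : U = U1 := by
  have hlam : U.lam = [1] := lam_eq_one U.pos U.sum_eq
  have hcells : cells U.lam = {(1,1)} := by rw [hlam, cells_one]
  apply SBT.ext' hlam
  · funext p
    by_cases hp : p ∈ cells U.lam
    · have h1 := entry_mem U hp
      have he : U.entry p = 1 := le_antisymm h1.2 h1.1
      rw [hcells] at hp
      simp only [Set.mem_singleton_iff] at hp
      subst hp
      rw [he]
      rfl
    · rw [U.entry_junk p hp]
      rw [hcells] at hp
      simp only [Set.mem_singleton_iff] at hp
      show (0 : ℕ) = if p = (1,1) then 1 else 0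
      rw [if_neg hp]
  · show U.barred = ∅
    ext a
    simp only [Set.mem_empty_iff_false, iff_false]
    intro ha
    have hai := U.barred_sub ha
    have ha1 : a = 1 := le_antisymm hai.2 hai.1
    subst ha1
    have hp : (1,1) ∈ cells U.lam := by rw [hcells]; rfl
    have he : U.entry (1,1) = 1 := by
      have h1 := entry_mem U hp
      exact le_antisymm h1.2 h1.1
    exact U.barred_nondiag (1,1) hp (by rw [he]; exact ha) rfl

instance : Unique (SBT 1) := ⟨⟨U1⟩, sbt_one_unique⟩

end SP
namespace SP

/-! ### Restriction of a tableau -/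

section Res
variable {m : ℕ} (U : SBT (m + 1))

lemma box_top_mem : U.box (m+1) ∈ cells U.lam ∧ U.entry (U.box (m+1)) = m + 1 :=
  box_spec U (by constructor <;> omega)

lemma res_data :
    (U.box (m+1)).1 - 1 < U.lam.length ∧
    (U.box (m+1)).1 = ((U.box (m+1)).1 - 1) + 1 ∧
    (U.box (m+1)).2 = U.lam.getD ((U.box (m+1)).1 - 1) 0 + ((U.box (m+1)).1 - 1) ∧
    (U.lam.getD ((U.box (m+1)).1 - 1) 0 = 1 ∨
      U.lam.getD ((U.box (m+1)).1 - 1 + 1) 0 + 2 ≤ U.lam.getD ((U.box (m+1)).1 - 1) 0) := by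
  obtain ⟨hmem, hent⟩ := box_top_mem U
  set p := U.box (m+1) with hp
  rw [mem_cells] at hmem
  obtain ⟨h1, h2, h3⟩ := hmem
  have hgpos : 0 < U.lam.getD (p.1 - 1) 0 := by omega
  have hlen : p.1 - 1 < U.lam.length := lt_length_of_gD_pos hgpos
  have hright : (p.1, p.2 + 1) ∉ cells U.lam := by
    intro hc
    have := U.row_incr p ⟨h1, h2, h3⟩ hc
    have h4 := entry_mem U hc
    rw [hent] at this
    rw [Set.mem_Icc] at h4
    omega
  rw [mem_cells] at hright
  simp only [Prod.fst, Prod.snd] at hright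
  refine ⟨hlen, by omega, by omega, ?_⟩
  have hdown : (p.1 + 1, p.2) ∉ cells U.lam := by
    intro hc
    have := U.col_incr p ⟨h1, h2, h3⟩ hc
    have h4 := entry_mem U hc
    rw [hent] at this
    rw [Set.mem_Icc] at h4
    omega
  rw [mem_cells] at hdown
  simp only [Prod.fst, Prod.snd] at hdown
  by_cases hd : p.1 + 1 ≤ p.2
  · right
    have he : p.1 + 1 - 1 = p.1 - 1 + 1 := by omega
    rw [he] at hdown
    omega
  · left
    omega

lemma cells_shrink_box :
    cells (shrinkLam U.lam ((U.box (m+1)).1 - 1)) = cells U.lam \ {U.box (m+1)} := by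
  have hbx : U.box (m+1) =
      ((U.box (m+1)).1 - 1 + 1,
        U.lam.getD ((U.box (m+1)).1 - 1) 0 + ((U.box (m+1)).1 - 1)) :=
    Prod.ext (res_data U).2.1 (res_data U).2.2.1
  rw [cells_shrinkLam U.sorted U.pos (res_data U).1, ← hbx]

/-- The restriction of `U : SBT (m+1)` to the entries `1, …, m`. -/
def res : SBT m where
  lam := shrinkLam U.lam ((U.box (m+1)).1 - 1)
  sorted := (sorted_pos_shrinkLam U.sorted U.pos (res_data U).1 (res_data U).2.2.2).1
  pos := (sorted_pos_shrinkLam U.sorted U.pos (res_data U).1 (res_data U).2.2.2).2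
  sum_eq := by
    rw [sum_shrinkLam U.sorted U.pos (res_data U).1, U.sum_eq]
    omega
  entry := fun q => if q ∈ cells (shrinkLam U.lam ((U.box (m+1)).1 - 1)) then U.entry q else 0
  bij := by
    have hcells := cells_shrink_box U
    refine ⟨?_, ?_, ?_⟩
    · rintro q hq
      have hq' : q ∈ cells U.lam \ {U.box (m+1)} := hcells ▸ hq
      obtain ⟨hqc, hqb⟩ := hq'
      rw [Set.mem_singleton_iff] at hqb
      dsimp only
      rw [if_pos hq]
      have h4 := entry_mem U hqc
      rw [Set.mem_Icc] at h4 ⊢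
      have : U.entry q ≠ m + 1 := by
        intro he
        exact hqb (box_eq U hqc he ▸ rfl)
      omega
    · rintro q hq r hr he
      dsimp only at he
      rw [if_pos hq, if_pos hr] at he
      have hq' : q ∈ cells U.lam \ {U.box (m+1)} := hcells ▸ hq
      have hr' : r ∈ cells U.lam \ {U.box (m+1)} := hcells ▸ hr
      exact U.bij.2.1 hq'.1 hr'.1 he
    · rintro a ha
      rw [Set.mem_Icc] at ha
      have haI : a ∈ Set.Icc 1 (m+1) := ⟨ha.1, by omega⟩
      obtain ⟨hq, hqe⟩ := box_spec U haI
      have hne : U.box a ≠ U.box (m+1) := by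
        intro he
        rw [he, (box_top_mem U).2] at hqe
        omega
      have hmem : U.box a ∈ cells (shrinkLam U.lam ((U.box (m+1)).1 - 1)) := by
        rw [hcells]
        exact ⟨hq, hne⟩
      refine ⟨U.box a, hmem, ?_⟩
      dsimp only
      rw [if_pos hmem]
      exact hqe
  entry_junk := fun p hp => if_neg hp
  row_incr := by
    rintro q hq hq2
    rw [if_pos hq, if_pos hq2]
    have hsub : cells (shrinkLam U.lam ((U.box (m+1)).1 - 1)) ⊆ cells U.lam := by
      rw [cells_shrink_box U]
      exact Set.diff_subset
    exact U.row_incr q (hsub hq) (hsub hq2)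
  col_incr := by
    rintro q hq hq2
    rw [if_pos hq, if_pos hq2]
    have hsub : cells (shrinkLam U.lam ((U.box (m+1)).1 - 1)) ⊆ cells U.lam := by
      rw [cells_shrink_box U]
      exact Set.diff_subset
    exact U.col_incr q (hsub hq) (hsub hq2)
  barred := U.barred \ {m + 1}
  barred_sub := by
    rintro a ⟨ha, hne⟩
    rw [Set.mem_singleton_iff] at hne
    have := U.barred_sub ha
    rw [Set.mem_Icc] at this ⊢
    omega
  barred_nondiag := by
    rintro q hq hbar
    rw [if_pos hq] at hbar
    have hsub : cells (shrinkLam U.lam ((U.box (m+1)).1 - 1)) ⊆ cells U.lam := by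
      rw [cells_shrink_box U]
      exact Set.diff_subset
    exact U.barred_nondiag q (hsub hq) hbar.1

lemma res_cells : cells (res U).lam = cells U.lam \ {U.box (m+1)} := cells_shrink_box U

lemma res_entry {q : ℕ × ℕ} (hq : q ∈ cells (res U).lam) :
    (res U).entry q = U.entry q := if_pos hq

lemma res_barred : (res U).barred = U.barred \ {m + 1} := rfl

lemma shapeAt_pred : U.shapeAt m = cells U.lam \ {U.box (m+1)} := by
  ext q
  constructor
  · rintro ⟨hc, he⟩
    refine ⟨hc, ?_⟩
    rw [Set.mem_singleton_iff]
    intro hb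
    have := (box_top_mem U).2
    rw [← hb] at this
    omega
  · rintro ⟨hc, hb⟩
    rw [Set.mem_singleton_iff] at hb
    refine ⟨hc, ?_⟩
    have h4 := entry_mem U hc
    rw [Set.mem_Icc] at h4
    have : U.entry q ≠ m + 1 := fun he => hb (box_eq U hc he).symm
    omega

lemma res_cells_shapeAt : cells (res U).lam = U.shapeAt m := by
  rw [res_cells, shapeAt_pred]

lemma shapeAt_res {k : ℕ} (hk : k ≤ m) : (res U).shapeAt k = U.shapeAt k := by
  ext q
  constructor
  · rintro ⟨hc, he⟩
    rw [res_entry U hc] at he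
    have h := res_cells U ▸ hc
    exact ⟨h.1, he⟩
  · rintro ⟨hc, he⟩
    have hne : q ∉ ({U.box (m+1)} : Set (ℕ × ℕ)) := by
      rw [Set.mem_singleton_iff]
      intro hb
      have := (box_top_mem U).2
      rw [← hb] at this
      omega
    have hc' : q ∈ cells (res U).lam := by
      rw [res_cells]
      exact ⟨hc, hne⟩
    exact ⟨hc', by rw [res_entry U hc']; exact he⟩

lemma box_res {a : ℕ} (ha1 : 1 ≤ a) (ha2 : a ≤ m) : (res U).box a = U.box a := by
  have hs := box_spec U (show a ∈ Set.Icc 1 (m+1) by rw [Set.mem_Icc]; omega)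
  have hne : U.box a ∉ ({U.box (m+1)} : Set (ℕ × ℕ)) := by
    rw [Set.mem_singleton_iff]
    intro he
    rw [he, (box_top_mem U).2] at hs
    omega
  have hc : U.box a ∈ cells (res U).lam := by
    rw [res_cells]
    exact ⟨hs.1, hne⟩
  exact box_eq (res U) hc (by rw [res_entry U hc]; exact hs.2)

lemma kappa_res {a : ℕ} (ha1 : 1 ≤ a) (ha2 : a ≤ m) : (res U).kappa a = U.kappa a := by
  rw [SBT.kappa, SBT.kappa, SBT.content, SBT.content, box_res U ha1 ha2]
  have hmem : (a ∈ (res U).barred) = (a ∈ U.barred) := by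
    rw [res_barred]
    simp only [Set.mem_diff, Set.mem_singleton_iff, eq_iff_iff]
    constructor
    · exact fun h => h.1
    · intro h
      exact ⟨h, by omega⟩
  rw [hmem]

end Res

end SP
namespace SP

/-! ### Extension of a tableau by one box -/

section Ext
variable {m : ℕ} (V : SBT m) {q : ℕ × ℕ} (hq : Addable (cells V.lam) q) (brd : Bool)
  (hb : brd = true → q.1 ≠ q.2)

include hq

lemma ext_char : 1 ≤ q.1 ∧ q.2 = V.lam.getD (q.1 - 1) 0 + q.1 ∧ q.1 - 1 ≤ V.lam.length ∧
    (q.1 = 1 ∨ V.lam.getD (q.1 - 1) 0 + 2 ≤ V.lam.getD (q.1 - 2) 0) :=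
  addable_char_fwd V.sorted V.pos hq

lemma ext_cond : q.1 - 1 = 0 ∨ V.lam.getD (q.1 - 1) 0 + 2 ≤ V.lam.getD (q.1 - 1 - 1) 0 := by
  obtain ⟨h1, h2, h3, h4⟩ := ext_char V hq
  rcases h4 with h | h
  · left; omega
  · right
    have : q.1 - 1 - 1 = q.1 - 2 := by omega
    rw [this]
    exact h

lemma ext_cells : cells (extendLam V.lam (q.1 - 1)) = insert q (cells V.lam) := by
  obtain ⟨h1, h2, h3, h4⟩ := ext_char V hq
  rw [cells_extendLam h3]
  congr 1
  exact (Prod.ext (by omega) (by omega)).symm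

/-- Add the entry `m+1` (barred iff `brd`) to `V` in the addable box `q`. -/
def extT : SBT (m + 1) where
  lam := extendLam V.lam (q.1 - 1)
  sorted := (sorted_pos_extendLam V.sorted V.pos (ext_char V hq).2.2.1 (ext_cond V hq)).1
  pos := (sorted_pos_extendLam V.sorted V.pos (ext_char V hq).2.2.1 (ext_cond V hq)).2
  sum_eq := by rw [sum_extendLam (ext_char V hq).2.2.1, V.sum_eq]
  entry := fun r => if r = q then m + 1 else V.entry r
  bij := by
    rw [ext_cells V hq]
    refine ⟨?_, ?_, ?_⟩
    · rintro r hr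
      dsimp only
      rcases hr with rfl | hr
      · rw [if_pos rfl, Set.mem_Icc]
        omega
      · have hne : r ≠ q := by rintro rfl; exact hq.1 hr
        rw [if_neg hne]
        have := entry_mem V hr
        rw [Set.mem_Icc] at this ⊢
        omega
    · rintro r hr s hs he
      dsimp only at he
      rcases hr with rfl | hr <;> rcases hs with rfl | hs
      · rfl
      · rw [if_pos rfl, if_neg (by rintro rfl; exact hq.1 hs)] at he
        have := entry_mem V hs
        rw [Set.mem_Icc] at this
        omega
      · rw [if_neg (by rintro rfl; exact hq.1 hr), if_pos rfl] at he
        have := entry_mem V hr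
        rw [Set.mem_Icc] at this
        omega
      · rw [if_neg (by rintro rfl; exact hq.1 hr), if_neg (by rintro rfl; exact hq.1 hs)] at he
        exact V.bij.2.1 hr hs he
    · rintro a ha
      rw [Set.mem_Icc] at ha
      by_cases ham : a = m + 1
      · refine ⟨q, Set.mem_insert q _, ?_⟩
        dsimp only
        rw [if_pos rfl, ham]
      · have haV : a ∈ Set.Icc 1 m := by rw [Set.mem_Icc]; omega
        obtain ⟨hc, he⟩ := box_spec V haV
        refine ⟨V.box a, Set.mem_insert_of_mem _ hc, ?_⟩
        dsimp only
        rw [if_neg (by rintro rfl; exact hq.1 hc)]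
        exact he
  entry_junk := by
    intro p hp
    rw [ext_cells V hq] at hp
    rw [if_neg (show ¬ p = q by rintro rfl; exact hp (Set.mem_insert p _))]
    exact V.entry_junk p (fun hc => hp (Set.mem_insert_of_mem _ hc))
  row_incr := by
    rintro r hr hr2
    rw [ext_cells V hq] at hr hr2
    rcases hr with rfl | hr
    · exfalso
      rcases hr2 with he | hr2
      · have := congrArg Prod.snd he
        simp only [Prod.snd] at this
        omega
      · have hcol : (r.1, r.2 + 1 - 1) ∈ cells V.lam := by
          apply (shifted_cells V.sorted).2.1 (r.1, r.2 + 1) hr2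
          simp only [Prod.fst, Prod.snd]
          have := hq.2.1 r (Set.mem_insert r _)
          omega
        have hsimp : (r.1, r.2 + 1 - 1) = r := by
          exact Prod.ext rfl (by simp only [Prod.snd]; omega)
        rw [hsimp] at hcol
        exact hq.1 hcol
    · have hne : r ≠ q := by rintro rfl; exact hq.1 hr
      rw [if_neg hne]
      rcases hr2 with he | hr2
      · rw [if_pos he]
        have := entry_mem V hr
        rw [Set.mem_Icc] at this
        omega
      · rw [if_neg (by rintro rfl; exact hq.1 hr2)]
        exact V.row_incr r hr hr2
  col_incr := by
    rintro r hr hr2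
    rw [ext_cells V hq] at hr hr2
    rcases hr with rfl | hr
    · exfalso
      rcases hr2 with he | hr2
      · have := congrArg Prod.fst he
        simp only [Prod.fst] at this
        omega
      · have hrow : (r.1 + 1 - 1, r.2) ∈ cells V.lam := by
          apply (shifted_cells V.sorted).2.2 (r.1 + 1, r.2) hr2
          simp only [Prod.fst]
          have := hq.2.1 r (Set.mem_insert r _)
          omega
        have hsimp : (r.1 + 1 - 1, r.2) = r := by
          exact Prod.ext (by simp only [Prod.fst]; omega) rfl
        rw [hsimp] at hrow
        exact hq.1 hrow
    · have hne : r ≠ q := by rintro rfl; exact hq.1 hr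
      rw [if_neg hne]
      rcases hr2 with he | hr2
      · rw [if_pos he]
        have := entry_mem V hr
        rw [Set.mem_Icc] at this
        omega
      · rw [if_neg (by rintro rfl; exact hq.1 hr2)]
        exact V.col_incr r hr hr2
  barred := V.barred ∪ (if brd then {m + 1} else ∅)
  barred_sub := by
    rintro a (ha | ha)
    · have := V.barred_sub ha
      rw [Set.mem_Icc] at this ⊢
      omega
    · split at ha
      · rw [Set.mem_singleton_iff] at ha
        rw [Set.mem_Icc]
        omega
      · exact absurd ha (Set.notMem_empty a)
  barred_nondiag := by
    rintro r hr hbar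
    rw [ext_cells V hq] at hr
    rcases hr with rfl | hr
    · rw [if_pos rfl] at hbar
      rcases hbar with hbar | hbar
      · have := V.barred_sub hbar
        rw [Set.mem_Icc] at this
        omega
      · split at hbar
        · exact hb (by assumption)
        · exact absurd hbar (Set.notMem_empty _)
    · have hne : r ≠ q := by rintro rfl; exact hq.1 hr
      rw [if_neg hne] at hbar
      have hle := entry_mem V hr
      rw [Set.mem_Icc] at hle
      rcases hbar with hbar | hbar
      · exact V.barred_nondiag r hr hbar
      · exfalso
        split at hbar
        · rw [Set.mem_singleton_iff] at hbar
          omega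
        · exact absurd hbar (Set.notMem_empty _)

lemma extT_cells : cells (extT V hq brd hb).lam = insert q (cells V.lam) := ext_cells V hq

lemma extT_entry_box : (extT V hq brd hb).entry q = m + 1 := if_pos rfl

lemma extT_box : (extT V hq brd hb).box (m + 1) = q := by
  apply box_eq
  · rw [extT_cells]
    exact Set.mem_insert q _
  · exact extT_entry_box V hq brd hb

lemma extT_barred_top : ((m + 1) ∈ (extT V hq brd hb).barred) = (brd = true) := by
  show ((m+1) ∈ V.barred ∪ (if brd then {m + 1} else ∅)) = _
  simp only [Set.mem_union, eq_iff_iff]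
  constructor
  · rintro (h | h)
    · have := V.barred_sub h
      rw [Set.mem_Icc] at this
      omega
    · split at h
      · assumption
      · exact absurd h (Set.notMem_empty _)
  · intro h
    right
    rw [if_pos h]
    rfl

lemma res_extT : res (extT V hq brd hb) = V := by
  have hbox := extT_box V hq brd hb
  have hlam : (res (extT V hq brd hb)).lam = V.lam := by
    show shrinkLam (extendLam V.lam (q.1 - 1)) (((extT V hq brd hb).box (m+1)).1 - 1) = V.lam
    rw [hbox]
    exact shrink_extend V.pos (ext_char V hq).2.2.1
  have hcells : cells (res (extT V hq brd hb)).lam = cells V.lam := by rw [hlam]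
  apply SBT.ext' hlam
  · funext r
    by_cases hr : r ∈ cells (res (extT V hq brd hb)).lam
    · rw [res_entry _ hr]
      have hrV : r ∈ cells V.lam := hcells ▸ hr
      show (if r = q then m + 1 else V.entry r) = V.entry r
      rw [if_neg (by rintro rfl; exact hq.1 hrV)]
    · rw [(res (extT V hq brd hb)).entry_junk r hr]
      rw [hcells] at hr
      exact (V.entry_junk r hr).symm
  · rw [res_barred]
    show (V.barred ∪ (if brd then {m + 1} else ∅)) \ {m+1} = V.barred
    ext a
    simp only [Set.mem_diff, Set.mem_union, Set.mem_singleton_iff]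
    constructor
    · rintro ⟨h | h, hne⟩
      · exact h
      · exfalso
        split at h
        · rw [Set.mem_singleton_iff] at h
          exact hne h
        · exact absurd h (Set.notMem_empty _)
    · intro h
      refine ⟨Or.inl h, ?_⟩
      have := V.barred_sub h
      rw [Set.mem_Icc] at this
      omega

lemma kappa_extT :
    (extT V hq brd hb).kappa (m + 1) = (if brd then (-1 : ℂ) else 1) * sqc q := by
  rw [SBT.kappa, SBT.content, extT_box V hq brd hb, sqc]
  congr 1
  rw [extT_barred_top V hq brd hb]
  by_cases h : brd <;> simp [h]

end Ext

end SP
namespace SP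

/-! ### Signed contents -/

lemma nat_mul_succ_inj {a b : ℕ} (h : a * (a + 1) = b * (b + 1)) : a = b := by
  nlinarith

lemma sqc_eq_sqc {q q' : ℕ × ℕ} (hq : q.1 ≤ q.2) (hq' : q'.1 ≤ q'.2)
    (h : sqc q = sqc q') : q.2 - q.1 = q'.2 - q'.1 := by
  rw [sqc, sqc, Complex.ofReal_inj] at h
  rw [Real.sqrt_inj (by positivity) (by positivity)] at h
  have h2 : ((q.2 - q.1 : ℕ) * ((q.2 - q.1 : ℕ) + 1) : ℝ) =
      ((q'.2 - q'.1 : ℕ) * ((q'.2 - q'.1 : ℕ) + 1) : ℝ) := by push_cast; linarith [h]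
  have h3 : ((q.2 - q.1 : ℕ) * ((q.2 - q.1 : ℕ) + 1) : ℕ) =
      ((q'.2 - q'.1 : ℕ) * ((q'.2 - q'.1 : ℕ) + 1) : ℕ) := by exact_mod_cast h2
  exact nat_mul_succ_inj h3

lemma sqc_eq_zero_iff {q : ℕ × ℕ} (hq : q.1 ≤ q.2) : sqc q = 0 ↔ q.1 = q.2 := by
  rw [sqc, Complex.ofReal_eq_zero]
  rw [show (0:ℝ) = Real.sqrt 0 by simp]
  rw [Real.sqrt_inj (by positivity) le_rfl]
  constructor
  · intro h
    have : ((q.2 - q.1 : ℕ) : ℝ) = 0 ∨ (((q.2 - q.1 : ℕ) : ℝ) + 1) = 0 := by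
      rcases mul_eq_zero.1 h with h | h
      · exact Or.inl h
      · exact Or.inr h
    rcases this with h | h
    · have : (q.2 - q.1 : ℕ) = 0 := by exact_mod_cast h
      omega
    · exfalso
      have : (0:ℝ) ≤ ((q.2 - q.1 : ℕ) : ℝ) := by positivity
      linarith
  · intro h
    have : (q.2 - q.1 : ℕ) = 0 := by omega
    rw [this]
    simp

lemma neg_sqc_cases {q q' : ℕ × ℕ} (h : sqc q = -sqc q') : sqc q = 0 ∧ sqc q' = 0 := by
  rw [sqc, sqc, ← Complex.ofReal_neg, Complex.ofReal_inj] at h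
  have h1 : (0:ℝ) ≤ Real.sqrt (((q.2 - q.1 : ℕ) : ℝ) * (((q.2 - q.1 : ℕ) : ℝ) + 1)) :=
    Real.sqrt_nonneg _
  have h2 : (0:ℝ) ≤ Real.sqrt (((q'.2 - q'.1 : ℕ) : ℝ) * (((q'.2 - q'.1 : ℕ) : ℝ) + 1)) :=
    Real.sqrt_nonneg _
  constructor <;> rw [sqc, Complex.ofReal_eq_zero] <;> linarith

lemma kappa_eq {n : ℕ} (U : SBT n) (a : ℕ) :
    U.kappa a = (if a ∈ U.barred then (-1 : ℂ) else 1) * sqc (U.box a) := rfl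

/-! ### Membership of `κ_{m+1}` in the node set -/

lemma box_addable_shape {m : ℕ} (U : SBT (m+1)) :
    Addable (U.shapeAt m) (U.box (m+1)) := box_addable U le_rfl

lemma box_in_grid {m : ℕ} (U : SBT (m+1)) :
    U.box (m+1) ∈ Finset.Icc 1 (m + 1 + 1) ×ˢ Finset.Icc 1 (m + 1 + 1) := by
  have hb := addable_bound (shapeAt_shifted U m) (shapeAt_finite U m)
    (le_of_eq (ncard_shapeAt U (by omega))) (box_addable_shape U)
  simp only [Finset.mem_product, Finset.mem_Icc]
  omega

lemma box_le {m : ℕ} (U : SBT (m+1)) : (U.box (m+1)).1 ≤ (U.box (m+1)).2 := by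
  have hb := addable_bound (shapeAt_shifted U m) (shapeAt_finite U m)
    (le_of_eq (ncard_shapeAt U (by omega))) (box_addable_shape U)
  exact hb.2.1

lemma kappa_mem_bVals {m : ℕ} (U : SBT (m+1)) :
    U.kappa (m+1) ∈ bVals (m+1) (U.shapeAt m) := by
  rw [bVals]
  rw [Finset.mem_biUnion]
  refine ⟨U.box (m+1), Finset.mem_filter.2 ⟨box_in_grid U, box_addable_shape U⟩, ?_⟩
  rw [kappa_eq]
  by_cases hd : (U.box (m+1)).1 = (U.box (m+1)).2
  · rw [if_pos hd]
    have hnb : (m+1) ∉ U.barred := by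
      intro hbar
      exact U.barred_nondiag _ (box_top_mem U).1 (by rw [(box_top_mem U).2]; exact hbar) hd
    rw [if_neg hnb, one_mul]
    exact Finset.mem_singleton_self _
  · rw [if_neg hd]
    by_cases hbar : (m+1) ∈ U.barred
    · rw [if_pos hbar]
      rw [Finset.mem_insert, Finset.mem_singleton]
      right
      ring
    · rw [if_neg hbar, one_mul]
      exact Finset.mem_insert_self _ _

/-! ### Injectivity of `(res, κ)` -/

lemma kappa_inj {m : ℕ} {U U' : SBT (m+1)} (hres : res U = res U')
    (hk : U.kappa (m+1) = U'.kappa (m+1)) : U = U' := by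
  have hshape : U.shapeAt m = U'.shapeAt m := by
    rw [← res_cells_shapeAt U, ← res_cells_shapeAt U', hres]
  set p := U.box (m+1) with hp
  set p' := U'.box (m+1) with hp'
  have hadd : Addable (U.shapeAt m) p := box_addable_shape U
  have hadd' : Addable (U.shapeAt m) p' := hshape ▸ box_addable_shape U'
  have hle : p.1 ≤ p.2 := box_le U
  have hle' : p'.1 ≤ p'.2 := box_le U'
  -- first: the two boxes agree and barred status agrees
  have hkk := hk
  rw [kappa_eq, kappa_eq, ← hp, ← hp'] at hkk
  have hbox_and_bar : p = p' ∧ ((m+1) ∈ U.barred ↔ (m+1) ∈ U'.barred) := by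
    have hboxeq : ∀ h : sqc p = sqc p', p = p' :=
      fun h => addable_content_inj (shapeAt_shifted U m) hadd hadd' (sqc_eq_sqc hle hle' h)
    by_cases hb1 : (m+1) ∈ U.barred <;> by_cases hb2 : (m+1) ∈ U'.barred
    · rw [if_pos hb1, if_pos hb2] at hkk
      have : sqc p = sqc p' := by
        have := mul_left_cancel₀ (show (-1 : ℂ) ≠ 0 by norm_num) hkk
        exact this
      exact ⟨hboxeq this, by tauto⟩
    · rw [if_pos hb1, if_neg hb2, neg_one_mul, one_mul] at hkk
      -- -sqc p = sqc p' : both zero, p diagonal: contradiction with barred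
      exfalso
      have h0 := neg_sqc_cases hkk.symm
      have hdiag : p.1 = p.2 := (sqc_eq_zero_iff hle).1 h0.2
      exact U.barred_nondiag p (box_top_mem U).1
        (by rw [(box_top_mem U).2]; exact hb1) hdiag
    · rw [if_neg hb1, if_pos hb2, neg_one_mul, one_mul] at hkk
      exfalso
      have h0 := neg_sqc_cases hkk
      have hdiag : p'.1 = p'.2 := (sqc_eq_zero_iff hle').1 h0.2
      exact U'.barred_nondiag p' (box_top_mem U').1
        (by rw [(box_top_mem U').2]; exact hb2) hdiag
    · rw [if_neg hb1, if_neg hb2, one_mul, one_mul] at hkk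
      exact ⟨hboxeq hkk, by tauto⟩
  obtain ⟨hbox, hbar⟩ := hbox_and_bar
  -- cells agree
  have hcells : cells U.lam = cells U'.lam := by
    rw [← shapeAt_top U, ← shapeAt_top U',
      shapeAt_succ U (le_refl (m+1)), shapeAt_succ U' (le_refl (m+1)),
      ← hp, ← hp', hshape, hbox]
  have hlam : U.lam = U'.lam := eq_of_gD_eq U.pos U'.pos (gD_eq_of_cells_eq hcells)
  have hrescells : cells (res U).lam = U.shapeAt m := res_cells_shapeAt U
  apply SBT.ext' hlam
  · funext r
    by_cases hr : r ∈ cells U.lam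
    · by_cases hrp : r = p
      · subst hrp
        rw [(box_top_mem U).2]
        rw [hbox, (box_top_mem U').2]
      · have hrS : r ∈ U.shapeAt m := by
          rw [shapeAt_pred U]
          exact ⟨hr, by rwa [Set.mem_singleton_iff, ← hp]⟩
        have hr1 : r ∈ cells (res U).lam := by rw [hrescells]; exact hrS
        have hr2 : r ∈ cells (res U').lam := by rw [← hres]; exact hr1
        calc U.entry r = (res U).entry r := (res_entry U hr1).symm
          _ = (res U').entry r := by rw [hres]
          _ = U'.entry r := res_entry U' hr2
    · rw [U.entry_junk r hr, U'.entry_junk r (hcells ▸ hr)]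
  · ext a
    by_cases ham : a = m + 1
    · subst ham
      exact hbar
    · constructor
      · intro ha
        have h1 : a ∈ (res U).barred := by
          rw [res_barred]
          exact ⟨ha, by rwa [Set.mem_singleton_iff]⟩
        rw [hres, res_barred] at h1
        exact h1.1
      · intro ha
        have h1 : a ∈ (res U').barred := by
          rw [res_barred]
          exact ⟨ha, by rwa [Set.mem_singleton_iff]⟩
        rw [← hres, res_barred] at h1
        exact h1.1

/-! ### Surjectivity -/

lemma exists_ext_of_mem_bVals {m : ℕ} (V : SBT m) {b : ℂ}
    (hb : b ∈ bVals (m+1) (cells V.lam)) :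
    ∃ U : SBT (m+1), res U = V ∧ U.kappa (m+1) = b := by
  rw [bVals, Finset.mem_biUnion] at hb
  obtain ⟨q, hqf, hbin⟩ := hb
  have hq : Addable (cells V.lam) q := (Finset.mem_filter.1 hqf).2
  by_cases hbq : b = sqc q
  · refine ⟨extT V hq false (fun h => by simp at h), res_extT V hq false _, ?_⟩
    rw [kappa_extT, hbq]
    simp
  · have hnd : q.1 ≠ q.2 := by
      intro hd
      rw [if_pos hd, Finset.mem_singleton] at hbin
      exact hbq hbin
    have hbneg : b = -sqc q := by
      rw [if_neg hnd, Finset.mem_insert, Finset.mem_singleton] at hbin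
      tauto
    refine ⟨extT V hq true (fun _ => hnd), res_extT V hq true _, ?_⟩
    rw [kappa_extT, hbneg]
    simp

lemma bVals_nonempty {m : ℕ} (V : SBT m) : (bVals (m+1) (cells V.lam)).Nonempty := by
  have hq : Addable (cells V.lam) (0 + 1, V.lam.getD 0 0 + 0 + 1) :=
    addable_char_bwd V.sorted V.pos (Nat.zero_le _) (Or.inl rfl)
  have hcard : (cells V.lam).ncard ≤ m := by
    rw [← shapeAt_top V]
    exact le_of_eq (ncard_shapeAt V le_rfl)
  have hbd := addable_bound (shifted_cells V.sorted) cells_finite hcard hq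
  refine ⟨sqc (0 + 1, V.lam.getD 0 0 + 0 + 1), ?_⟩
  rw [bVals, Finset.mem_biUnion]
  refine ⟨(0 + 1, V.lam.getD 0 0 + 0 + 1), Finset.mem_filter.2 ⟨?_, hq⟩, ?_⟩
  · simp only [Finset.mem_product, Finset.mem_Icc]
    omega
  · split
    · exact Finset.mem_singleton_self _
    · exact Finset.mem_insert_self _ _

end SP
namespace SP

/-! ### The recursion for `eAux` -/

lemma eAux_succ (N : ℕ) {r : ℕ} (U : SBT r) (k : ℕ) :
    eAux N U (k + 2) = eAux N U (k + 1) *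
      Polynomial.aeval (xS N (k + 2))
        (∏ b ∈ bVals r (U.shapeAt (k + 1)) \ {U.kappa (k + 2)},
          (Polynomial.C ((U.kappa (k + 2) - b)⁻¹) * (Polynomial.X - Polynomial.C b))) := rfl

lemma prod_eq_basis {r : ℕ} (U : SBT r) (k : ℕ) (B : Finset ℂ) :
    (∏ b ∈ B \ {U.kappa (k + 2)},
      (Polynomial.C ((U.kappa (k + 2) - b)⁻¹) * (Polynomial.X - Polynomial.C b))) =
    Lagrange.basis B id (U.kappa (k + 2)) := by
  rw [Lagrange.basis, Finset.erase_eq]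
  apply Finset.prod_congr rfl
  intro b _
  rw [Lagrange.basisDivisor]
  rfl

lemma eAux_res_eq (n : ℕ) {m : ℕ} (U : SBT (m+1)) :
    ∀ j, j ≤ m → eAux n U j = eAux n (res U) j := by
  intro j
  induction j using Nat.strong_induction_on with
  | _ j ih =>
    match j with
    | 0 => intro _; rfl
    | 1 => intro _; rfl
    | (k+2) =>
      intro hj
      rw [eAux_succ, eAux_succ]
      rw [shapeAt_res U (show k + 1 ≤ m by omega),
        kappa_res U (show 1 ≤ k + 2 by omega) (show k + 2 ≤ m by omega)]
      rw [bVals_indep (shapeAt_shifted U (k+1)) (shapeAt_finite U (k+1))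
        (le_of_eq (ncard_shapeAt U (show k + 1 ≤ m + 1 by omega)))
        (show k + 1 ≤ m + 1 by omega) (show k + 1 ≤ m by omega)]
      rw [ih (k+1) (by omega) (by omega)]

end SP

open SP in
theorem statement3_aux (n : ℕ) (hn : 1 ≤ n) : ∑ᶠ U : SBT n, eU U = 1 := by
  have key : ∀ m : ℕ, 1 ≤ m → (∑ V : SBT m, eAux n V m) = 1 := by
    intro m hm
    induction m with
    | zero => omega
    | succ m ihm =>
      rcases Nat.eq_or_lt_of_le hm with h1 | h1
      · -- m + 1 = 1
        have hm0 : m = 0 := by omega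
        subst hm0
        haveI : Unique (SBT (0+1)) := ⟨⟨U1⟩, fun V => sbt_one_unique V⟩
        rw [Fintype.sum_unique]
        rfl
      · have hm1 : 1 ≤ m := by omega
        have ih := ihm hm1
        -- fiber the sum over res
        rw [← Finset.sum_fiberwise_of_maps_to (g := res)
          (t := Finset.univ) (fun U _ => Finset.mem_univ (res U)) (fun U => eAux n U (m+1))]
        rw [← ih]
        apply Finset.sum_congr rfl
        intro V _
        -- inner sum over the fiber of V
        have hinner : ∑ U ∈ Finset.univ.filter (fun U => res U = V), eAux n U (m+1) =
            ∑ b ∈ bVals (m+1) (cells V.lam),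
              eAux n V m * Polynomial.aeval (xS n (m+1)) (Lagrange.basis
                (bVals (m+1) (cells V.lam)) id b) := by
          apply Finset.sum_bij (fun U _ => U.kappa (m+1))
          · intro U hU
            rw [Finset.mem_filter] at hU
            have := kappa_mem_bVals U
            rwa [← res_cells_shapeAt U, hU.2] at this
          · intro U hU U' hU' he
            rw [Finset.mem_filter] at hU hU'
            exact kappa_inj (hU.2.trans hU'.2.symm) he
          · intro b hb
            obtain ⟨U, hres, hkap⟩ := exists_ext_of_mem_bVals V hb
            exact ⟨U, Finset.mem_filter.2 ⟨Finset.mem_univ U, hres⟩, hkap⟩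
          · intro U hU
            rw [Finset.mem_filter] at hU
            have heq : eAux n U (m+1) = eAux n U m * Polynomial.aeval (xS n (m+1))
                (∏ b ∈ bVals (m+1) (U.shapeAt m) \ {U.kappa (m+1)},
                  (Polynomial.C ((U.kappa (m+1) - b)⁻¹) *
                    (Polynomial.X - Polynomial.C b))) := by
              have := eAux_succ n U (m - 1)
              have hm' : m - 1 + 2 = m + 1 := by omega
              have hm'' : m - 1 + 1 = m := by omega
              rw [hm', hm''] at this
              exact this
            rw [heq, eAux_res_eq n U m le_rfl, hU.2]
            have hsh : U.shapeAt m = cells V.lam := by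
              rw [← res_cells_shapeAt U, hU.2]
            rw [hsh]
            congr 1
            have hb : U.kappa (m+1) = U.kappa (m - 1 + 2) := by
              congr 1
              omega
            rw [hb, prod_eq_basis U (m-1) (bVals (m+1) (cells V.lam)), ← hb]
        rw [hinner, ← Finset.mul_sum, ← map_sum]
        rw [Lagrange.sum_basis (Set.injOn_id _) (bVals_nonempty V)]
        rw [map_one, mul_one]
  have h := key n hn
  rw [finsum_eq_sum_of_fintype]
  exact h

/-- The idempotents `e_U` form a decomposition of the identity in the Sergeev
superalgebra: `1 = Σ_λ Σ_U e_U`, the (finite) sum over all standard barred tableaux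
with `n` boxes of all strict-partition shapes `λ` of `n`. -/
theorem statement3 (n : ℕ) (hn : 1 ≤ n) : ∑ᶠ U : SBT n, eU U = 1 := by
  exact statement3_aux n hn
end
end

section
/- Let U be a standard barred tableau with n boxes. If a is an unbarred non-diagonal entry of U and U' is the tableau obtained from U by replacing a with ā, then e_U c_a = c_a e_{U'} and e_{U'} c_a = c_a e_U in the Sergeev superalgebra S_n. Moreover, if d is a diagonal entry of U, then e_U c_d = c_d e_U. -/
open scoped Classical

noncomputable section

-- basic relation lemmas
section Lemmas
variable {n : ℕ}

lemma ct_anti (a b : ℕ) : cS n b * tS n a = -(tS n a * cS n b) := by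
  by_cases ha : 1 ≤ a ∧ a < n
  · by_cases hb : 1 ≤ b ∧ b ≤ n
    · have h := RingQuot.mkAlgHom_rel ℂ (SRel.tc a b ha.1 ha.2 hb.1 hb.2)
      simp only [map_mul, map_neg] at h
      rw [← tS, ← cS] at h
      exact neg_eq_iff_eq_neg.mp h.symm
    · have : cS n b = 0 := by
        rw [cS, cf, dif_neg hb]; simp
      simp [this]
  · have : tS n a = 0 := by
      rw [tS, tf, dif_neg ha]; simp
    simp [this]

lemma cc_anti (a b : ℕ) (hab : a ≠ b) : cS n a * cS n b = -(cS n b * cS n a) := by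
  by_cases ha : 1 ≤ a ∧ a ≤ n
  · by_cases hb : 1 ≤ b ∧ b ≤ n
    · have h := RingQuot.mkAlgHom_rel ℂ (SRel.canti a b ha.1 ha.2 hb.1 hb.2 hab)
      simp only [map_mul, map_neg] at h
      rw [← cS, ← cS] at h
      exact h
    · have : cS n b = 0 := by rw [cS, cf, dif_neg hb]; simp
      simp [this]
  · have : cS n a = 0 := by rw [cS, cf, dif_neg ha]; simp
    simp [this]

end Lemmas
section Lemmas2
variable {n : ℕ}

section ACC
variable {R : Type*} [Ring R] {c x y : R}

lemma AC_mul_AC (h1 : c * x = -(x * c)) (h2 : c * y = -(y * c)) :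
    c * (x * y) = (x * y) * c := by
  rw [← mul_assoc, h1, neg_mul, mul_assoc, h2, mul_neg, neg_neg, ← mul_assoc]

lemma C_mul_AC (h1 : c * x = x * c) (h2 : c * y = -(y * c)) :
    c * (x * y) = -((x * y) * c) := by
  rw [← mul_assoc, h1, mul_assoc, h2, mul_neg, ← mul_assoc]

lemma AC_mul_C (h1 : c * x = -(x * c)) (h2 : c * y = y * c) :
    c * (x * y) = -((x * y) * c) := by
  rw [← mul_assoc, h1, neg_mul, mul_assoc, h2, ← mul_assoc]

lemma AC_neg {c x : R} (h : c * x = -(x * c)) : c * (-x) = -((-x) * c) := by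
  rw [mul_neg, h, neg_neg, neg_mul, neg_neg]

lemma C_mul_C (h1 : c * x = x * c) (h2 : c * y = y * c) :
    c * (x * y) = (x * y) * c := by
  rw [← mul_assoc, h1, mul_assoc, h2, ← mul_assoc]

end ACC

lemma c_listprod (b : ℕ) (L : List ℕ) :
    (Even L.length → cS n b * (L.map (tS n)).prod = (L.map (tS n)).prod * cS n b) ∧
    (Odd L.length → cS n b * (L.map (tS n)).prod = -((L.map (tS n)).prod * cS n b)) := by
  induction L with
  | nil => simp
  | cons hd tl ih =>
      simp only [List.map_cons, List.prod_cons, List.length_cons]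
      constructor
      · intro h
        have hodd : Odd tl.length := by
          rcases Nat.even_or_odd tl.length with he | ho
          · exact absurd h (by simp [Nat.even_add_one, he, Nat.not_even_iff_odd.mpr,
              Nat.odd_add_one] )
          · exact ho
        exact AC_mul_AC (ct_anti hd b) (ih.2 hodd)
      · intro h
        have heven : Even tl.length := by
          rcases Nat.even_or_odd tl.length with he | ho
          · exact he
          · exact absurd h (by simp [Nat.odd_add_one, Nat.not_odd_iff_even, ho,
              Nat.not_even_iff_odd.mpr])
        exact AC_mul_C (ct_anti hd b) (ih.1 heven)

lemma c_ttS (b k m : ℕ) : cS n b * ttS n k m = -(ttS n k m * cS n b) := by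
  rw [ttS]
  set P1 := ((List.range' (k + 1) (m - 1 - k)).reverse.map (tS n)).prod with hP1
  set P2 := (((List.range' (k + 1) (m - 1 - k))).map (tS n)).prod with hP2
  have key : cS n b * (P1 * tS n k * P2) = -((P1 * tS n k * P2) * cS n b) := by
    rcases Nat.even_or_odd (m - 1 - k) with he | ho
    · have h1 : cS n b * P1 = P1 * cS n b := (c_listprod b _).1 (by simpa using he)
      have h2 : cS n b * P2 = P2 * cS n b := (c_listprod b _).1 (by simpa using he)
      exact AC_mul_C (C_mul_AC h1 (ct_anti k b)) h2
    · have h1 : cS n b * P1 = -(P1 * cS n b) := (c_listprod b _).2 (by simpa using ho)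
      have h2 : cS n b * P2 = -(P2 * cS n b) := (c_listprod b _).2 (by simpa using ho)
      exact C_mul_AC (AC_mul_AC h1 (ct_anti k b)) h2
  rw [mul_smul_comm, key, smul_neg, smul_mul_assoc]

lemma c_tsgn (b k m : ℕ) : cS n b * tsgn n k m = -(tsgn n k m * cS n b) := by
  rw [tsgn]
  split_ifs with h1 h2
  · exact c_ttS b k m
  · exact AC_neg (c_ttS b m k)
  · simp

lemma c_mS (b m : ℕ) : cS n b * mS n m = -(mS n m * cS n b) := by
  rw [mS, Finset.mul_sum, Finset.sum_mul, ← Finset.sum_neg_distrib]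
  exact Finset.sum_congr rfl fun k _ => c_tsgn b k m

lemma c_xS_comm (a b : ℕ) (hab : a ≠ b) : Commute (cS n a) (xS n b) := by
  unfold Commute SemiconjBy
  have key : cS n a * (mS n b * cS n b) = mS n b * cS n b * cS n a :=
    AC_mul_AC (c_mS a b) (cc_anti a b hab)
  rw [xS, mul_smul_comm, key, smul_mul_assoc]

lemma c_xS_anti (a : ℕ) : cS n a * xS n a = -(xS n a * cS n a) := by
  have key : cS n a * (mS n a * cS n a) = -(mS n a * cS n a * cS n a) :=
    AC_mul_C (c_mS a a) rfl
  rw [xS, mul_smul_comm, key, smul_neg, smul_mul_assoc]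

end Lemmas2
section Lemmas3
open Polynomial

variable {A : Type*} [Ring A] [Algebra ℂ A]

lemma commute_aeval' {c x : A} (h : Commute c x) (p : Polynomial ℂ) :
    Commute c (Polynomial.aeval x p) := by
  induction p using Polynomial.induction_on' with
  | add p q hp hq => simpa [map_add] using hp.add_right hq
  | monomial m r =>
      rw [Polynomial.aeval_monomial]
      exact Commute.mul_right (show Commute c ((algebraMap ℂ A) r) from
        ((Algebra.commutes r c).symm)) (h.pow_right m)

lemma anticommute_pow {c x : A} (h : c * x = -(x * c)) (m : ℕ) :
    c * x ^ m = (-x) ^ m * c := by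
  induction m with
  | zero => simp
  | succ m ih =>
      rw [pow_succ, ← mul_assoc, ih, mul_assoc, h, pow_succ]
      simp only [mul_neg, neg_mul, mul_assoc]

lemma anticommute_aeval {c x : A} (h : c * x = -(x * c)) (p : Polynomial ℂ) :
    c * Polynomial.aeval x p = Polynomial.aeval (-x) p * c := by
  induction p using Polynomial.induction_on' with
  | add p q hp hq => rw [map_add, map_add, mul_add, add_mul, hp, hq]
  | monomial m r =>
      rw [Polynomial.aeval_monomial, Polynomial.aeval_monomial]
      rw [← mul_assoc, ← Algebra.commutes, mul_assoc, anticommute_pow h m, ← mul_assoc]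

/-- The factor polynomial in the definition of `eAux`. -/
noncomputable def Pk (κ : ℂ) (B : Finset ℂ) : Polynomial ℂ :=
  ∏ b ∈ B \ {κ}, (Polynomial.C ((κ - b)⁻¹) * (Polynomial.X - Polynomial.C b))

lemma sdiff_neg_image (κ : ℂ) (B : Finset ℂ) (hs : ∀ b ∈ B, -b ∈ B) :
    Finset.image (fun b => -b) (B \ {κ}) = B \ {-κ} := by
  ext y
  simp only [Finset.mem_image, Finset.mem_sdiff, Finset.mem_singleton]
  constructor
  · rintro ⟨b, ⟨hb, hbκ⟩, rfl⟩
    exact ⟨hs b hb, fun hy => hbκ (by simpa using congrArg Neg.neg hy)⟩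
  · rintro ⟨hy, hyκ⟩
    exact ⟨-y, ⟨hs y hy, fun hc => hyκ (by simpa using congrArg Neg.neg hc)⟩, neg_neg y⟩

lemma Pk_neg (κ : ℂ) (B : Finset ℂ) (hs : ∀ b ∈ B, -b ∈ B) :
    Polynomial.aeval (-Polynomial.X : Polynomial ℂ) (Pk κ B) = Pk (-κ) B := by
  rw [Pk, map_prod]
  have h1 : ∀ b : ℂ,
      Polynomial.aeval (-Polynomial.X : Polynomial ℂ)
        (Polynomial.C ((κ - b)⁻¹) * (Polynomial.X - Polynomial.C b))
      = Polynomial.C ((-κ - -b)⁻¹) * (Polynomial.X - Polynomial.C (-b)) := by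
    intro b
    rw [map_mul, map_sub, Polynomial.aeval_X, Polynomial.aeval_C, Polynomial.aeval_C]
    have e1 : ((-κ - -b)⁻¹ : ℂ) = -(κ - b)⁻¹ := by
      rw [show (-κ - -b : ℂ) = -(κ - b) by ring, neg_inv]
    rw [e1]
    simp only [Polynomial.algebraMap_eq, map_neg]
    ring
  rw [Finset.prod_congr rfl fun b _ => h1 b]
  rw [Pk, ← sdiff_neg_image κ B hs]
  rw [Finset.prod_image (fun a _ b _ h => neg_injective h)]

lemma anticommute_Pk {c x : A} (h : c * x = -(x * c)) (κ : ℂ) (B : Finset ℂ)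
    (hs : ∀ b ∈ B, -b ∈ B) :
    c * Polynomial.aeval x (Pk κ B) = Polynomial.aeval x (Pk (-κ) B) * c := by
  rw [anticommute_aeval h]
  congr 1
  have := Polynomial.aeval_algHom_apply (Polynomial.aeval x) (-Polynomial.X : Polynomial ℂ)
    (Pk κ B)
  rw [map_neg, Polynomial.aeval_X] at this
  rw [this, Pk_neg κ B hs]

end Lemmas3
section Lemmas4
open Polynomial

lemma step_swap {R : Type*} [Ring R] {e e' c p q : R}
    (h1 : e * c = c * e') (h2 : p * c = c * q) : (e * p) * c = c * (e' * q) := by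
  rw [mul_assoc, h2, ← mul_assoc, h1, mul_assoc]

lemma bVals_neg (n : ℕ) (S : Set (ℕ × ℕ)) : ∀ b ∈ bVals n S, -b ∈ bVals n S := by
  intro b hb
  rw [bVals, Finset.mem_biUnion] at hb ⊢
  obtain ⟨q, hq, hbq⟩ := hb
  refine ⟨q, hq, ?_⟩
  by_cases hd : q.1 = q.2
  · rw [if_pos hd] at hbq ⊢
    have h0 : sqc q = 0 := by
      rw [sqc, Nat.sub_eq_zero_of_le hd.ge]
      norm_num
    simp only [h0, Finset.mem_singleton] at hbq ⊢
    rw [hbq, neg_zero]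
  · rw [if_neg hd] at hbq ⊢
    simp only [Finset.mem_insert, Finset.mem_singleton] at hbq ⊢
    rcases hbq with h | h
    · right; rw [h]
    · left; rw [h, neg_neg]

lemma box_congr {n : ℕ} (U V : SBT n) (h1 : V.lam = U.lam) (h2 : V.entry = U.entry) :
    V.box = U.box := by
  funext a
  simp only [SBT.box, h1, h2]

lemma content_congr {n : ℕ} (U V : SBT n) (h1 : V.lam = U.lam) (h2 : V.entry = U.entry) :
    V.content = U.content := by
  funext a
  simp only [SBT.content, box_congr U V h1 h2]

lemma shape_congr {n : ℕ} (U V : SBT n) (h1 : V.lam = U.lam) (h2 : V.entry = U.entry)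
    (k : ℕ) : V.shapeAt k = U.shapeAt k := by
  rw [SBT.shapeAt, SBT.shapeAt, h1, h2]

lemma kappa_congr {n : ℕ} (U V : SBT n) (a : ℕ) (h1 : V.lam = U.lam) (h2 : V.entry = U.entry)
    (hb : V.barred = insert a U.barred) (m : ℕ) (hma : m ≠ a) : V.kappa m = U.kappa m := by
  rw [SBT.kappa, SBT.kappa, content_congr U V h1 h2]
  have hiff : (m ∈ V.barred) ↔ (m ∈ U.barred) := by
    rw [hb, Set.mem_insert_iff]
    simp [hma]
  rw [if_congr hiff rfl rfl]

lemma kappa_bar {n : ℕ} (U V : SBT n) (a : ℕ) (h1 : V.lam = U.lam) (h2 : V.entry = U.entry)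
    (hb : V.barred = insert a U.barred) (hbar : a ∉ U.barred) : V.kappa a = -U.kappa a := by
  rw [SBT.kappa, SBT.kappa, content_congr U V h1 h2]
  rw [if_pos (by rw [hb]; exact Set.mem_insert a _), if_neg hbar]
  ring

lemma kappa_diag {n : ℕ} (U : SBT n) (d i : ℕ) (hc : (i, i) ∈ cells U.lam)
    (he : U.entry (i, i) = d) : U.kappa d = 0 := by
  have hex : ∃ p ∈ cells U.lam, U.entry p = d := ⟨(i, i), hc, he⟩
  have hbox : U.box d = (i, i) := by
    rw [SBT.box, dif_pos hex]
    have hsp := hex.choose_spec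
    exact U.bij.injOn hsp.1 hc (hsp.2.trans he.symm)
  rw [SBT.kappa, SBT.content, hbox]
  norm_num

lemma main_comm {n : ℕ} (U V : SBT n) (a : ℕ)
    (hsh : ∀ k, V.shapeAt k = U.shapeAt k)
    (hk : ∀ m, m ≠ a → V.kappa m = U.kappa m)
    (hka : V.kappa a = -U.kappa a) :
    ∀ k, eAux n U k * cS n a = cS n a * eAux n V k := by
  intro k
  induction k with
  | zero => show (1 : Sergeev n) * cS n a = cS n a * 1; rw [one_mul, mul_one]
  | succ k ih =>
      cases k with
      | zero => show (1 : Sergeev n) * cS n a = cS n a * 1; rw [one_mul, mul_one]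
      | succ k' =>
          show (eAux n U (k' + 1) *
              Polynomial.aeval (xS n (k' + 2)) (Pk (U.kappa (k' + 2))
                (bVals n (U.shapeAt (k' + 1))))) * cS n a
            = cS n a * (eAux n V (k' + 1) *
              Polynomial.aeval (xS n (k' + 2)) (Pk (V.kappa (k' + 2))
                (bVals n (V.shapeAt (k' + 1)))))
          rw [hsh (k' + 1)]
          by_cases hm : k' + 2 = a
          · have hanti : cS n a * xS n (k' + 2) = -(xS n (k' + 2) * cS n a) := by
              rw [hm]; exact c_xS_anti a
            have hP : Polynomial.aeval (xS n (k' + 2)) (Pk (U.kappa (k' + 2))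
                  (bVals n (U.shapeAt (k' + 1)))) * cS n a
                = cS n a * Polynomial.aeval (xS n (k' + 2)) (Pk (V.kappa (k' + 2))
                  (bVals n (U.shapeAt (k' + 1)))) := by
              have := anticommute_Pk hanti (-U.kappa (k' + 2))
                (bVals n (U.shapeAt (k' + 1))) (bVals_neg n _)
              rw [neg_neg] at this
              rw [← this, hm, hka, ← hm]
            exact step_swap ih hP
          · have hcomm : Commute (cS n a) (Polynomial.aeval (xS n (k' + 2))
                (Pk (U.kappa (k' + 2)) (bVals n (U.shapeAt (k' + 1))))) :=
              commute_aeval' (c_xS_comm a (k' + 2) (fun h => hm h.symm)) _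
            rw [hk (k' + 2) hm]
            exact step_swap ih hcomm.symm

end Lemmas4


/-- If `a` is an unbarred (non-diagonal) entry of `U` and `U'` is obtained from `U`
by barring `a`, then `e_U c_a = c_a e_{U'}` and `e_{U'} c_a = c_a e_U`; moreover `e_U`
commutes with `c_d` for every diagonal entry `d` of `U`. -/
theorem statement5 (n : ℕ) (hn : 1 ≤ n) (U U' : SBT n) (a : ℕ) (ha1 : 1 ≤ a) (ha2 : a ≤ n)
    (hbar : a ∉ U.barred)
    (hlam : U'.lam = U.lam) (hentry : U'.entry = U.entry)
    (hbar' : U'.barred = insert a U.barred) :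
    eU U * cS n a = cS n a * eU U' ∧
    eU U' * cS n a = cS n a * eU U ∧
    (∀ d i : ℕ, (i, i) ∈ cells U.lam → U.entry (i, i) = d → eU U * cS n d = cS n d * eU U) := by
  have hsh := shape_congr U U' hlam hentry
  have hk := kappa_congr U U' a hlam hentry hbar'
  have hka := kappa_bar U U' a hlam hentry hbar' hbar
  refine ⟨main_comm U U' a hsh hk hka n, ?_, ?_⟩
  · have hsh' : ∀ k, U.shapeAt k = U'.shapeAt k := fun k => (hsh k).symm
    have hk' : ∀ m, m ≠ a → U.kappa m = U'.kappa m := fun m hm => (hk m hm).symm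
    have hka' : U.kappa a = -U'.kappa a := by rw [hka, neg_neg]
    exact main_comm U' U a hsh' hk' hka' n
  · intro d i hc he
    have h0 : U.kappa d = 0 := kappa_diag U d i hc he
    exact main_comm U U d (fun _ => rfl) (fun _ _ => rfl) (by rw [h0, neg_zero]) n
end
end
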